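/- arXiv:2505.09199 — 5 statements merged into one kernel-verified Lean document; each statement's English description precedes it below -/
import Mathlib

section
/- Assume μ > 4 and θ ∈ (θ_*(μ), θ^*(μ)). Then the equation S(x) = x has exactly three real solutions x_d < x_m < x_u, and they satisfy x_d ∈ (0, x_*(μ)), x_m ∈ (x_*(μ), x^*(μ)) and x_u ∈ (x^*(μ), 1). -/
/-- The sigmoid nonlinearity `S(x) = 1/(1 + exp(-μ(x - θ)))`. -/
noncomputable def sigmoid (μ θ x : ℝ) : ℝ := 1 / (1 + Real.exp (-μ * (x - θ)))

/-- The function `f(x) = x + (1/μ)·ln((1−x)/x)`. -/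
noncomputable def fmu (μ x : ℝ) : ℝ := x + (1 / μ) * Real.log ((1 - x) / x)

/-- `x_*(μ) = 1/2 − √(1/4 − 1/μ)`. -/
noncomputable def xlow (μ : ℝ) : ℝ := 1 / 2 - Real.sqrt (1 / 4 - 1 / μ)

/-- `x^*(μ) = 1/2 + √(1/4 − 1/μ)`. -/
noncomputable def xhigh (μ : ℝ) : ℝ := 1 / 2 + Real.sqrt (1 / 4 - 1 / μ)

/-- `θ_*(μ) = f(x_*(μ))`. -/
noncomputable def thetalow (μ : ℝ) : ℝ := fmu μ (xlow μ)

/-- `θ^*(μ) = f(x^*(μ))`. -/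
noncomputable def thetahigh (μ : ℝ) : ℝ := fmu μ (xhigh μ)

section Helpers
open Set Filter Real

lemma fp_iff (μ θ x : ℝ) (hμ : 0 < μ) :
    sigmoid μ θ x = x ↔ (x ∈ Set.Ioo (0:ℝ) 1 ∧ fmu μ x = θ) := by
  constructor
  · intro h
    have hE : 0 < Real.exp (-μ * (x - θ)) := Real.exp_pos _
    have hden : 0 < 1 + Real.exp (-μ * (x - θ)) := by linarith
    have hx0 : 0 < x := by
      rw [← h]; unfold _root_.sigmoid; positivity
    have hx1 : x < 1 := by
      rw [← h]; unfold _root_.sigmoid; rw [div_lt_one hden]; linarith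
    refine ⟨⟨hx0, hx1⟩, ?_⟩
    unfold _root_.sigmoid at h
    have h1 : 1 = x * (1 + Real.exp (-μ * (x - θ))) := (div_eq_iff hden.ne').mp h
    have hexp : Real.exp (-μ * (x - θ)) = (1 - x) / x := by
      rw [eq_div_iff hx0.ne']; nlinarith
    have hlog : -μ * (x - θ) = Real.log ((1 - x) / x) := by
      rw [← hexp, Real.log_exp]
    unfold fmu
    rw [← hlog]
    field_simp
    ring
  · rintro ⟨⟨hx0, hx1⟩, hf⟩
    have hq : (0:ℝ) < (1 - x) / x := div_pos (by linarith) hx0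
    have hlog : Real.log ((1 - x) / x) = -μ * (x - θ) := by
      unfold fmu at hf
      have h2 : (1 / μ) * Real.log ((1 - x) / x) = θ - x := by linarith
      field_simp at h2
      nlinarith [h2]
    have hexp : Real.exp (-μ * (x - θ)) = (1 - x) / x := by
      rw [← hlog, Real.exp_log hq]
    unfold _root_.sigmoid
    rw [hexp]
    have h3 : 1 + (1 - x) / x = 1 / x := by field_simp; ring
    rw [h3, one_div_one_div]

lemma basic_facts (μ : ℝ) (hμ : 4 < μ) :
    0 < xlow μ ∧ xlow μ < 1/2 ∧ (1/2 : ℝ) < xhigh μ ∧ xhigh μ < 1 ∧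
    xlow μ + xhigh μ = 1 ∧ xlow μ * xhigh μ = 1 / μ := by
  have hμ0 : (0:ℝ) < μ := by linarith
  have h14 : 1 / μ < 1 / 4 := by
    rw [div_lt_div_iff₀ hμ0 (by norm_num)]; linarith
  have hpos : (0:ℝ) < 1 / 4 - 1 / μ := by
    have : (0:ℝ) < 1 / μ := by positivity
    linarith
  have hr0 : 0 < Real.sqrt (1 / 4 - 1 / μ) := Real.sqrt_pos.mpr hpos
  have hr2 : Real.sqrt (1 / 4 - 1 / μ) ^ 2 = 1 / 4 - 1 / μ := Real.sq_sqrt hpos.le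
  have hrlt : Real.sqrt (1 / 4 - 1 / μ) < 1 / 2 := by
    rw [show (1/2 : ℝ) = Real.sqrt (1/4) by
      rw [show (1/4:ℝ) = (1/2)^2 by norm_num, Real.sqrt_sq (by norm_num)]]
    exact Real.sqrt_lt_sqrt hpos.le (by
      have : (0:ℝ) < 1 / μ := by positivity
      linarith)
  unfold xlow xhigh
  refine ⟨by linarith, by linarith, by linarith, by linarith, by ring, ?_⟩
  nlinarith [hr2]


lemma hasDeriv (μ x : ℝ) (hx : x ∈ Set.Ioo (0:ℝ) 1) :
    HasDerivAt (fmu μ) (1 + (1 / μ) * ((1 - x)⁻¹ * (-1) - x⁻¹)) x := by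
  obtain ⟨hx0, hx1⟩ := hx
  have h1 : HasDerivAt (fun y : ℝ => 1 - y) (-1) x := by
    simpa using (hasDerivAt_id' x).const_sub (1:ℝ)
  have hlog1 : HasDerivAt (fun y : ℝ => Real.log (1 - y)) ((1 - x)⁻¹ * (-1)) x :=
    (Real.hasDerivAt_log (by linarith)).comp x h1
  have hlog2 : HasDerivAt (fun y : ℝ => Real.log y) x⁻¹ x := Real.hasDerivAt_log hx0.ne'
  have hg : HasDerivAt (fun y : ℝ => y + (1 / μ) * (Real.log (1 - y) - Real.log y))
      (1 + (1 / μ) * ((1 - x)⁻¹ * (-1) - x⁻¹)) x :=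
    (hasDerivAt_id x).add (((hlog1.sub hlog2)).const_mul (1/μ))
  refine hg.congr_of_eventuallyEq ?_
  filter_upwards [Ioo_mem_nhds hx0 hx1] with y hy
  unfold fmu
  rw [Real.log_div (by linarith [hy.2] : (1:ℝ) - y ≠ 0) (ne_of_gt hy.1)]

lemma fmu_deriv_eq (μ x : ℝ) (hμ : 0 < μ) (hx : x ∈ Set.Ioo (0:ℝ) 1) :
    deriv (fmu μ) x = (μ * (x * (1 - x)) - 1) / (μ * (x * (1 - x))) := by
  rw [(hasDeriv μ x hx).deriv]
  have hx0 : x ≠ 0 := ne_of_gt hx.1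
  have hx1 : (1:ℝ) - x ≠ 0 := by have := hx.2; intro h; linarith [hx.2, sub_eq_zero.mp h]
  have hμ' : μ ≠ 0 := ne_of_gt hμ
  field_simp
  ring

lemma cont_on (μ : ℝ) : ContinuousOn (fmu μ) (Set.Ioo (0:ℝ) 1) := fun x hx =>
  ((hasDeriv μ x hx).continuousAt).continuousWithinAt

lemma deriv_sign (μ x : ℝ) (hμ : 4 < μ) (hx : x ∈ Set.Ioo (0:ℝ) 1) :
    deriv (fmu μ) x = -(μ * ((x - xlow μ) * (x - xhigh μ))) / (μ * (x * (1 - x))) := by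
  obtain ⟨_, _, _, _, hsum, hprod⟩ := basic_facts μ hμ
  have hμ0 : (0:ℝ) < μ := by linarith
  rw [fmu_deriv_eq μ x hμ0 hx]
  congr 1
  have hone : μ * (1/μ) = 1 := by field_simp
  linear_combination (-(μ*x)) * hsum + μ * hprod + hone

lemma anti_left (μ : ℝ) (hμ : 4 < μ) : StrictAntiOn (fmu μ) (Set.Ioc 0 (xlow μ)) := by
  obtain ⟨h1, h2, h3, h4, hsum, hprod⟩ := basic_facts μ hμ
  have hμ0 : (0:ℝ) < μ := by linarith
  apply strictAntiOn_of_deriv_neg (convex_Ioc _ _)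
    ((cont_on μ).mono (fun y hy => ⟨hy.1, by linarith [hy.2]⟩))
  intro x hx
  rw [interior_Ioc] at hx
  have hx' : x ∈ Set.Ioo (0:ℝ) 1 := ⟨hx.1, by linarith [hx.2]⟩
  rw [deriv_sign μ x hμ hx']
  apply div_neg_of_neg_of_pos
  · have : 0 < (x - xlow μ) * (x - xhigh μ) := by nlinarith [hx.1, hx.2]
    nlinarith
  · exact mul_pos hμ0 (mul_pos hx'.1 (by linarith [hx'.2]))

lemma mono_mid (μ : ℝ) (hμ : 4 < μ) : StrictMonoOn (fmu μ) (Set.Icc (xlow μ) (xhigh μ)) := by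
  obtain ⟨h1, h2, h3, h4, hsum, hprod⟩ := basic_facts μ hμ
  have hμ0 : (0:ℝ) < μ := by linarith
  apply strictMonoOn_of_deriv_pos (convex_Icc _ _)
    ((cont_on μ).mono (fun y hy => ⟨by linarith [hy.1], by linarith [hy.2]⟩))
  intro x hx
  rw [interior_Icc] at hx
  have hx' : x ∈ Set.Ioo (0:ℝ) 1 := ⟨by linarith [hx.1], by linarith [hx.2]⟩
  rw [deriv_sign μ x hμ hx']
  apply div_pos
  · have : (x - xlow μ) * (x - xhigh μ) < 0 :=
      mul_neg_of_pos_of_neg (by linarith [hx.1]) (by linarith [hx.2])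
    nlinarith
  · exact mul_pos hμ0 (mul_pos hx'.1 (by linarith [hx'.2]))

lemma anti_right (μ : ℝ) (hμ : 4 < μ) : StrictAntiOn (fmu μ) (Set.Ico (xhigh μ) 1) := by
  obtain ⟨h1, h2, h3, h4, hsum, hprod⟩ := basic_facts μ hμ
  have hμ0 : (0:ℝ) < μ := by linarith
  apply strictAntiOn_of_deriv_neg (convex_Ico _ _)
    ((cont_on μ).mono (fun y hy => ⟨by linarith [hy.1], hy.2⟩))
  intro x hx
  rw [interior_Ico] at hx
  have hx' : x ∈ Set.Ioo (0:ℝ) 1 := ⟨by linarith [hx.1], hx.2⟩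
  rw [deriv_sign μ x hμ hx']
  apply div_neg_of_neg_of_pos
  · have : 0 < (x - xlow μ) * (x - xhigh μ) := by nlinarith [hx.1, hx.2]
    nlinarith
  · exact mul_pos hμ0 (mul_pos hx'.1 (by linarith [hx'.2]))

lemma tends_zero (μ : ℝ) (hμ : 0 < μ) : Tendsto (fmu μ) (nhdsWithin 0 (Set.Ioi 0)) atTop := by
  have h1 : Tendsto (fun x : ℝ => (1 - x) / x) (nhdsWithin 0 (Set.Ioi 0)) atTop := by
    have ha : Tendsto (fun x : ℝ => (1 - x)) (nhdsWithin 0 (Set.Ioi 0)) (nhds 1) := by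
      have h : Tendsto (fun x : ℝ => (1:ℝ) - x) (nhds 0) (nhds 1) := by
        simpa using ((continuous_sub_left (1:ℝ)).tendsto 0)
      exact h.mono_left nhdsWithin_le_nhds
    have hb : Tendsto (fun x : ℝ => x⁻¹) (nhdsWithin 0 (Set.Ioi 0)) atTop :=
      tendsto_inv_nhdsGT_zero
    simpa [div_eq_mul_inv] using ha.pos_mul_atTop one_pos hb
  have h2 : Tendsto (fun x : ℝ => (1/μ) * Real.log ((1 - x) / x)) (nhdsWithin 0 (Set.Ioi 0)) atTop :=
    (Real.tendsto_log_atTop.comp h1).const_mul_atTop (by positivity)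
  have h3 : Tendsto (fun x : ℝ => x) (nhdsWithin 0 (Set.Ioi 0)) (nhds 0) :=
    tendsto_id.mono_left nhdsWithin_le_nhds
  exact h3.add_atTop h2

lemma tends_one (μ : ℝ) (hμ : 0 < μ) : Tendsto (fmu μ) (nhdsWithin 1 (Set.Iio 1)) atBot := by
  have h1 : Tendsto (fun x : ℝ => (1 - x) / x) (nhdsWithin 1 (Set.Iio 1)) (nhdsWithin 0 (Set.Ioi 0)) := by
    rw [tendsto_nhdsWithin_iff]
    constructor
    · have hc : ContinuousAt (fun x : ℝ => (1 - x) / x) 1 :=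
        ((continuous_sub_left (1:ℝ)).continuousAt).div continuousAt_id one_ne_zero
      have := hc.tendsto.mono_left (nhdsWithin_le_nhds (s := Set.Iio (1:ℝ)))
      simpa using this
    · filter_upwards [Ioo_mem_nhdsLT_of_mem (by norm_num : (1:ℝ) ∈ Set.Ioc 0 1)] with y hy
      exact div_pos (by linarith [hy.2]) hy.1
  have h2 : Tendsto (fun x : ℝ => (1/μ) * Real.log ((1 - x) / x)) (nhdsWithin 1 (Set.Iio 1)) atBot := by
    have := Real.tendsto_log_nhdsGT_zero.comp h1
    exact this.const_mul_atBot (by positivity)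
  have h3 : Tendsto (fun x : ℝ => x) (nhdsWithin 1 (Set.Iio 1)) (nhds 1) :=
    tendsto_id.mono_left nhdsWithin_le_nhds
  exact h3.add_atBot h2

end Helpers

/-- Assume `μ > 4` and `θ ∈ (θ_*(μ), θ^*(μ))`. Then the equation
`S(x) = x` has exactly three real solutions `x_d < x_m < x_u`, with
`x_d ∈ (0, x_*(μ))`, `x_m ∈ (x_*(μ), x^*(μ))` and `x_u ∈ (x^*(μ), 1)`. -/
theorem stmt_6 (μ θ : ℝ) (hμ : 4 < μ) (hθ : θ ∈ Set.Ioo (thetalow μ) (thetahigh μ)) :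
    ∃ xd xm xu : ℝ, xd < xm ∧ xm < xu ∧
      sigmoid μ θ xd = xd ∧ sigmoid μ θ xm = xm ∧ sigmoid μ θ xu = xu ∧
      xd ∈ Set.Ioo 0 (xlow μ) ∧ xm ∈ Set.Ioo (xlow μ) (xhigh μ) ∧
      xu ∈ Set.Ioo (xhigh μ) 1 ∧
      (∀ x : ℝ, sigmoid μ θ x = x → x = xd ∨ x = xm ∨ x = xu) := by
  open Set Filter Real in
  obtain ⟨hθ1, hθ2⟩ := hθ
  have hθ1' : fmu μ (xlow μ) < θ := hθ1
  have hθ2' : θ < fmu μ (xhigh μ) := hθ2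
  obtain ⟨h1, h2, h3, h4, hsum, hprod⟩ := basic_facts μ hμ
  have hμ0 : (0:ℝ) < μ := by linarith
  -- pick a near 0 with fmu μ a > θ
  have hev0 : ∀ᶠ x in nhdsWithin 0 (Set.Ioi 0), θ < fmu μ x :=
    (tends_zero μ hμ0).eventually_gt_atTop θ
  have hmem0 : Set.Ioo (0:ℝ) (xlow μ) ∈ nhdsWithin (0:ℝ) (Set.Ioi 0) :=
    Ioo_mem_nhdsGT_of_mem ⟨le_refl 0, h1⟩
  obtain ⟨a, hθa, haI⟩ := (hev0.and (eventually_of_mem hmem0 (fun x hx => hx))).exists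
  -- pick b near 1 with fmu μ b < θ
  have hev1 : ∀ᶠ x in nhdsWithin 1 (Set.Iio 1), fmu μ x < θ :=
    (tends_one μ hμ0).eventually_lt_atBot θ
  have hmem1 : Set.Ioo (xhigh μ) (1:ℝ) ∈ nhdsWithin (1:ℝ) (Set.Iio 1) :=
    Ioo_mem_nhdsLT_of_mem ⟨h4, le_refl 1⟩
  obtain ⟨b, hθb, hbI⟩ := (hev1.and (eventually_of_mem hmem1 (fun x hx => hx))).exists
  -- IVT on [a, xlow]
  have hsub1 : Set.Icc a (xlow μ) ⊆ Set.Ioo (0:ℝ) 1 :=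
    fun y hy => ⟨lt_of_lt_of_le haI.1 hy.1, lt_of_le_of_lt hy.2 (by linarith)⟩
  obtain ⟨xd, hxdI, hxdE⟩ := intermediate_value_Ioo' haI.2.le ((cont_on μ).mono hsub1)
    (⟨hθ1', hθa⟩ : θ ∈ Set.Ioo (fmu μ (xlow μ)) (fmu μ a))
  -- IVT on [xlow, xhigh]
  have hsub2 : Set.Icc (xlow μ) (xhigh μ) ⊆ Set.Ioo (0:ℝ) 1 :=
    fun y hy => ⟨lt_of_lt_of_le h1 hy.1, lt_of_le_of_lt hy.2 h4⟩
  obtain ⟨xm, hxmI, hxmE⟩ := intermediate_value_Ioo (by linarith : xlow μ ≤ xhigh μ)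
    ((cont_on μ).mono hsub2) (⟨hθ1', hθ2'⟩ : θ ∈ Set.Ioo (fmu μ (xlow μ)) (fmu μ (xhigh μ)))
  -- IVT on [xhigh, b]
  have hsub3 : Set.Icc (xhigh μ) b ⊆ Set.Ioo (0:ℝ) 1 :=
    fun y hy => ⟨lt_of_lt_of_le (by linarith) hy.1, lt_of_le_of_lt hy.2 hbI.2⟩
  obtain ⟨xu, hxuI, hxuE⟩ := intermediate_value_Ioo' hbI.1.le ((cont_on μ).mono hsub3)
    (⟨hθb, hθ2'⟩ : θ ∈ Set.Ioo (fmu μ b) (fmu μ (xhigh μ)))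
  have hxd0 : 0 < xd := lt_trans haI.1 hxdI.1
  have hxdlow : xd < xlow μ := hxdI.2
  have hxu1 : xu < 1 := lt_trans hxuI.2 hbI.2
  have hxuhigh : xhigh μ < xu := hxuI.1
  refine ⟨xd, xm, xu, by linarith [hxmI.1], by linarith [hxmI.2], ?_, ?_, ?_,
    ⟨hxd0, hxdlow⟩, hxmI, ⟨hxuhigh, hxu1⟩, ?_⟩
  · exact (fp_iff μ θ xd hμ0).mpr ⟨⟨hxd0, by linarith⟩, hxdE⟩
  · exact (fp_iff μ θ xm hμ0).mpr ⟨⟨by linarith [hxmI.1], by linarith [hxmI.2]⟩, hxmE⟩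
  · exact (fp_iff μ θ xu hμ0).mpr ⟨⟨by linarith, hxu1⟩, hxuE⟩
  · intro x hx
    obtain ⟨⟨hx0, hx1⟩, hfx⟩ := (fp_iff μ θ x hμ0).mp hx
    rcases lt_trichotomy x (xlow μ) with h | h | h
    · left
      exact (anti_left μ hμ).injOn ⟨hx0, h.le⟩ ⟨hxd0, hxdlow.le⟩ (hfx.trans hxdE.symm)
    · exfalso; rw [h] at hfx; linarith [hθ1']
    · rcases lt_trichotomy x (xhigh μ) with h' | h' | h'
      · right; left
        exact (mono_mid μ hμ).injOn ⟨h.le, h'.le⟩ ⟨hxmI.1.le, hxmI.2.le⟩ (hfx.trans hxmE.symm)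
      · exfalso; rw [h'] at hfx; linarith [hθ2']
      · right; right
        exact (anti_right μ hμ).injOn ⟨h'.le, hx1⟩ ⟨hxuhigh.le, hxu1⟩ (hfx.trans hxuE.symm)
end

section
/- Assume μ > 4 and either θ > θ^*(μ), or 0 ≤ θ < θ_*(μ). Then the equation S(x) = x has exactly one real solution; in the first case it lies in (0, x_*(μ)) and in the second case it lies in (x^*(μ), 1). -/
lemma sigmoid_fixed_mem {μ θ x : ℝ} (h : sigmoid μ θ x = x) : x ∈ Set.Ioo (0:ℝ) 1 := by
  have hE : 0 < Real.exp (-μ * (x - θ)) := Real.exp_pos _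
  constructor
  · rw [← h]; unfold sigmoid; positivity
  · rw [← h]; unfold sigmoid
    rw [div_lt_one (by linarith)]; linarith

lemma sigmoid_fixed_iff {μ θ x : ℝ} (hμ : 0 < μ) (hx : x ∈ Set.Ioo (0:ℝ) 1) :
    sigmoid μ θ x = x ↔ fmu μ x = θ := by
  obtain ⟨hx0, hx1⟩ := hx
  set E := Real.exp (-μ * (x - θ)) with hEdef
  have hE : 0 < E := Real.exp_pos _
  have h1x : (0:ℝ) < 1 - x := by linarith
  constructor
  · intro h
    have h1 : 1 = x * (1 + E) := (div_eq_iff (by linarith : (1:ℝ) + E ≠ 0)).mp h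
    have hEx : E = (1 - x) / x := by
      rw [eq_div_iff hx0.ne']
      linear_combination -h1
    have hlog : -μ * (x - θ) = Real.log ((1 - x) / x) := by
      rw [← hEx, hEdef, Real.log_exp]
    unfold fmu
    rw [← hlog]
    field_simp
    ring
  · intro h
    have hlog : Real.log ((1 - x) / x) = -μ * (x - θ) := by
      unfold fmu at h
      have hμ' : μ ≠ 0 := hμ.ne'
      field_simp at h
      linarith
    have hEx : E = (1 - x) / x := by
      rw [hEdef, ← hlog, Real.exp_log (by positivity)]
    unfold sigmoid
    rw [← hEdef, hEx]
    field_simp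
    ring

lemma fmu_symm {μ x : ℝ} (hx : x ∈ Set.Ioo (0:ℝ) 1) : fmu μ (1 - x) = 1 - fmu μ x := by
  obtain ⟨hx0, hx1⟩ := hx
  unfold fmu
  have h1 : (1 - (1 - x)) / (1 - x) = ((1 - x) / x)⁻¹ := by
    rw [inv_div]; ring_nf
  rw [h1, Real.log_inv]
  ring

lemma hasDerivAt_fmu {μ x : ℝ} (hx : x ∈ Set.Ioo (0:ℝ) 1) :
    HasDerivAt (fmu μ) (1 + (1 / μ) * (-(1 - x)⁻¹ - x⁻¹)) x := by
  obtain ⟨hx0, hx1⟩ := hx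
  have h1x : (0:ℝ) < 1 - x := by linarith
  have h2 : HasDerivAt (fun y : ℝ => Real.log (1 - y)) (-(1 - x)⁻¹) x := by
    have := (Real.hasDerivAt_log h1x.ne').comp x ((hasDerivAt_id x).const_sub 1)
    simp at this; exact this
  have h3 : HasDerivAt Real.log x⁻¹ x := Real.hasDerivAt_log hx0.ne'
  have h4 : HasDerivAt (fun y : ℝ => y + (1 / μ) * (Real.log (1 - y) - Real.log y))
      (1 + (1 / μ) * (-(1 - x)⁻¹ - x⁻¹)) x := (hasDerivAt_id x).add ((h2.sub h3).const_mul (1 / μ))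
  apply h4.congr_of_eventuallyEq
  filter_upwards [Ioo_mem_nhds hx0 hx1] with y hy
  obtain ⟨hy0, hy1⟩ := hy
  unfold fmu
  rw [Real.log_div (by linarith) hy0.ne']


open Set Filter in
lemma key (μ τ : ℝ) (hμ : 4 < μ) (hτ : thetahigh μ < τ) :
    ∃ x ∈ Set.Ioo (0:ℝ) (xlow μ), fmu μ x = τ ∧
      ∀ y ∈ Set.Ioo (0:ℝ) 1, fmu μ y = τ → y = x := by
  have hμ0 : (0:ℝ) < μ := by linarith
  set s := Real.sqrt (1 / 4 - 1 / μ) with hs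
  have hq : (0:ℝ) < 1 / 4 - 1 / μ := by
    have : 1 / μ < 1 / 4 := by
      rw [div_lt_div_iff₀ hμ0 (by norm_num)]; linarith
    linarith
  have hs0 : 0 < s := Real.sqrt_pos.mpr hq
  have hs2 : s ^ 2 = 1 / 4 - 1 / μ := Real.sq_sqrt hq.le
  have hshalf : s < 1 / 2 := by
    nlinarith [hs2, div_pos one_pos hμ0]
  have ha : xlow μ = 1 / 2 - s := rfl
  have hb : xhigh μ = 1 / 2 + s := rfl
  have ha0 : 0 < xlow μ := by rw [ha]; linarith
  have hab : xlow μ < xhigh μ := by rw [ha, hb]; linarith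
  have hb1 : xhigh μ < 1 := by rw [hb]; linarith
  have ha1 : xlow μ < 1 := lt_trans hab hb1
  have hb0 : 0 < xhigh μ := lt_trans ha0 hab
  have hμinv : μ * (1 / 4 - s ^ 2) = 1 := by
    rw [hs2]; field_simp; ring
  -- continuity
  have hcont : ContinuousOn (fmu μ) (Set.Ioo 0 1) := fun x hx =>
    (hasDerivAt_fmu hx).continuousAt.continuousWithinAt
  -- derivative sign helper
  have hderiv : ∀ x ∈ Set.Ioo (0:ℝ) 1,
      deriv (fmu μ) x = (μ * (x * (1 - x)) - 1) / (μ * (x * (1 - x))) := by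
    intro x hx
    obtain ⟨hx0, hx1⟩ := hx
    rw [(hasDerivAt_fmu ⟨hx0, hx1⟩).deriv]
    have h1x : (0:ℝ) < 1 - x := by linarith
    field_simp
    ring
  -- strict anti on Ioc 0 xlow
  have hanti1 : StrictAntiOn (fmu μ) (Set.Ioc 0 (xlow μ)) := by
    apply strictAntiOn_of_deriv_neg (convex_Ioc _ _)
      (hcont.mono (fun x hx => ⟨hx.1, lt_of_le_of_lt hx.2 ha1⟩))
    intro x hx
    rw [interior_Ioc] at hx
    obtain ⟨hx0, hxa⟩ := hx
    have hx1 : x < 1 := lt_trans hxa ha1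
    rw [hderiv x ⟨hx0, hx1⟩]
    have h1x : (0:ℝ) < 1 - x := by linarith
    apply div_neg_of_neg_of_pos
    · rw [ha] at hxa
      nlinarith [mul_pos (show (0:ℝ) < 1/2 - s - x by linarith) (show (0:ℝ) < 1/2 + s - x by linarith)]
    · positivity
  -- strict mono on Icc xlow xhigh
  have hmono : StrictMonoOn (fmu μ) (Set.Icc (xlow μ) (xhigh μ)) := by
    apply strictMonoOn_of_deriv_pos (convex_Icc _ _)
      (hcont.mono (fun x hx => ⟨lt_of_lt_of_le ha0 hx.1, lt_of_le_of_lt hx.2 hb1⟩))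
    intro x hx
    rw [interior_Icc] at hx
    obtain ⟨hxa, hxb⟩ := hx
    have hx0 : 0 < x := lt_trans ha0 hxa
    have hx1 : x < 1 := lt_trans hxb hb1
    rw [hderiv x ⟨hx0, hx1⟩]
    have h1x : (0:ℝ) < 1 - x := by linarith
    apply div_pos
    · rw [ha] at hxa; rw [hb] at hxb
      nlinarith [mul_pos (show (0:ℝ) < x - (1/2 - s) by linarith) (show (0:ℝ) < 1/2 + s - x by linarith)]
    · positivity
  -- strict anti on Ico xhigh 1
  have hanti2 : StrictAntiOn (fmu μ) (Set.Ico (xhigh μ) 1) := by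
    apply strictAntiOn_of_deriv_neg (convex_Ico _ _)
      (hcont.mono (fun x hx => ⟨lt_of_lt_of_le hb0 hx.1, hx.2⟩))
    intro x hx
    rw [interior_Ico] at hx
    obtain ⟨hxb, hx1⟩ := hx
    have hx0 : 0 < x := lt_trans hb0 hxb
    rw [hderiv x ⟨hx0, hx1⟩]
    have h1x : (0:ℝ) < 1 - x := by linarith
    apply div_neg_of_neg_of_pos
    · rw [hb] at hxb
      nlinarith [mul_pos (show (0:ℝ) < x - (1/2 - s) by linarith) (show (0:ℝ) < x - (1/2 + s) by linarith)]
    · positivity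
  have hlowhigh : thetalow μ < thetahigh μ :=
    hmono ⟨le_refl _, hab.le⟩ ⟨hab.le, le_refl _⟩ hab
  -- tendsto atTop as x → 0+
  have htend : Tendsto (fmu μ) (nhdsWithin 0 (Set.Ioi 0)) atTop := by
    have l0 : Tendsto (fun x : ℝ => 1 - x) (nhdsWithin 0 (Set.Ioi 0)) (nhds 1) := by
      have hc : Continuous (fun x : ℝ => 1 - x) := continuous_const.sub continuous_id
      have : Tendsto (fun x : ℝ => 1 - x) (nhds 0) (nhds 1) := by
        simpa using hc.tendsto (0:ℝ)
      exact this.mono_left nhdsWithin_le_nhds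
    have l1 : Tendsto (fun x : ℝ => (1 - x) / x) (nhdsWithin 0 (Set.Ioi 0)) atTop := by
      have := Filter.Tendsto.pos_mul_atTop one_pos l0 tendsto_inv_nhdsGT_zero
      simpa [div_eq_mul_inv] using this
    have l2 := Real.tendsto_log_atTop.comp l1
    have l3 : Tendsto (fun x : ℝ => (1/μ) * Real.log ((1 - x) / x))
        (nhdsWithin 0 (Set.Ioi 0)) atTop := l2.const_mul_atTop (by positivity)
    have l4 : Tendsto (fun x : ℝ => x) (nhdsWithin 0 (Set.Ioi 0)) (nhds 0) :=
      tendsto_id.mono_left nhdsWithin_le_nhds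
    have heq : fmu μ = fun x : ℝ => x + (1 / μ) * Real.log ((1 - x) / x) := rfl
    rw [heq]
    exact l4.add_atTop l3
  -- pick c with fmu c > τ and 0 < c < xlow
  have hev : ∀ᶠ x in nhdsWithin 0 (Set.Ioi 0), τ < fmu μ x ∧ x ∈ Set.Ioo (0:ℝ) (xlow μ) := by
    apply (htend.eventually_gt_atTop τ).and
    exact Ioo_mem_nhdsGT_of_mem ⟨le_refl _, ha0⟩
  obtain ⟨c, hcτ, hc0, hca⟩ := hev.exists
  -- IVT on [c, xlow]
  have hicc : Set.Icc c (xlow μ) ⊆ Set.Ioo (0:ℝ) 1 :=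
    fun x hx => ⟨lt_of_lt_of_le hc0 hx.1, lt_of_le_of_lt hx.2 ha1⟩
  have hτmem : τ ∈ Set.Ioo (fmu μ (xlow μ)) (fmu μ c) := by
    constructor
    · exact lt_trans hlowhigh hτ
    · exact hcτ
  obtain ⟨x, hxmem, hfx⟩ := intermediate_value_Ioo' hca.le (hcont.mono hicc) hτmem
  have hx0 : 0 < x := lt_trans hc0 hxmem.1
  have hxa : x < xlow μ := hxmem.2
  refine ⟨x, ⟨hx0, hxa⟩, hfx, ?_⟩
  intro y ⟨hy0, hy1⟩ hfy
  have hya : y < xlow μ := by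
    by_contra hcon
    push_neg at hcon
    rcases le_or_gt y (xhigh μ) with h2 | h2
    · have := hmono.monotoneOn ⟨hcon, h2⟩ ⟨hab.le, le_refl _⟩ h2
      have : fmu μ y ≤ thetahigh μ := this
      linarith [hfy, hτ, this]
    · have := hanti2 ⟨le_refl _, hb1⟩ ⟨h2.le, hy1⟩ h2
      have : fmu μ y < thetahigh μ := this
      linarith [hfy, hτ, this]
  exact hanti1.injOn ⟨hy0, hya.le⟩ ⟨hx0, hxa.le⟩ (hfy.trans hfx.symm)


/-- Assume `μ > 4` and either `θ > θ^*(μ)`, or `0 ≤ θ < θ_*(μ)`.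
Then the equation `S(x) = x` has exactly one real solution; in the first case it lies in
`(0, x_*(μ))` and in the second case it lies in `(x^*(μ), 1)`. -/
theorem stmt_7 (μ θ : ℝ) (hμ : 4 < μ) (hθ0 : 0 ≤ θ)
    (hθ : thetahigh μ < θ ∨ θ < thetalow μ) :
    (thetahigh μ < θ →
      ∃ x : ℝ, sigmoid μ θ x = x ∧ x ∈ Set.Ioo 0 (xlow μ) ∧
        ∀ y : ℝ, sigmoid μ θ y = y → y = x) ∧
    (θ < thetalow μ →
      ∃ x : ℝ, sigmoid μ θ x = x ∧ x ∈ Set.Ioo (xhigh μ) 1 ∧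
        ∀ y : ℝ, sigmoid μ θ y = y → y = x) := by
  have hμ0 : (0:ℝ) < μ := by linarith
  have hq : (0:ℝ) < 1 / 4 - 1 / μ := by
    have : 1 / μ < 1 / 4 := by
      rw [div_lt_div_iff₀ hμ0 (by norm_num)]; linarith
    linarith
  have hs0 : 0 < Real.sqrt (1 / 4 - 1 / μ) := Real.sqrt_pos.mpr hq
  have hshalf : Real.sqrt (1 / 4 - 1 / μ) < 1 / 2 := by
    nlinarith [Real.sq_sqrt hq.le, div_pos one_pos hμ0]
  have ha0 : 0 < xlow μ := by unfold xlow; linarith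
  have ha1 : xlow μ < 1 := by unfold xlow; linarith
  have hb0 : 0 < xhigh μ := by unfold xhigh; linarith
  have hb1 : xhigh μ < 1 := by unfold xhigh; linarith
  have hba : xhigh μ = 1 - xlow μ := by unfold xhigh xlow; ring
  have hamem : xlow μ ∈ Set.Ioo (0:ℝ) 1 := ⟨ha0, ha1⟩
  have hth : thetahigh μ = 1 - thetalow μ := by
    unfold thetahigh thetalow
    rw [hba, fmu_symm hamem]
  constructor
  · intro hθ1
    obtain ⟨x, hxmem, hfx, huniq⟩ := key μ θ hμ hθ1
    have hx01 : x ∈ Set.Ioo (0:ℝ) 1 := ⟨hxmem.1, lt_trans hxmem.2 ha1⟩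
    refine ⟨x, (sigmoid_fixed_iff hμ0 hx01).mpr hfx, hxmem, ?_⟩
    intro y hy
    have hy01 := sigmoid_fixed_mem hy
    exact huniq y hy01 ((sigmoid_fixed_iff hμ0 hy01).mp hy)
  · intro hθ2
    have hτ : thetahigh μ < 1 - θ := by rw [hth]; linarith
    obtain ⟨x', hx'mem, hfx', huniq⟩ := key μ (1 - θ) hμ hτ
    have hx'01 : x' ∈ Set.Ioo (0:ℝ) 1 := ⟨hx'mem.1, lt_trans hx'mem.2 ha1⟩
    set x := 1 - x' with hxdef
    have hx01 : x ∈ Set.Ioo (0:ℝ) 1 := ⟨by simp [hxdef]; linarith [hx'01.2], by simp [hxdef]; linarith [hx'01.1]⟩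
    have hfx : fmu μ x = θ := by
      rw [hxdef, fmu_symm hx'01, hfx']; ring
    have hxmem : x ∈ Set.Ioo (xhigh μ) 1 := by
      constructor
      · rw [hba, hxdef]; simp; exact hx'mem.2
      · exact hx01.2
    refine ⟨x, (sigmoid_fixed_iff hμ0 hx01).mpr hfx, hxmem, ?_⟩
    intro y hy
    have hy01 := sigmoid_fixed_mem hy
    have hfy : fmu μ y = θ := (sigmoid_fixed_iff hμ0 hy01).mp hy
    have h1y01 : (1 - y) ∈ Set.Ioo (0:ℝ) 1 := ⟨by linarith [hy01.2], by linarith [hy01.1]⟩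
    have hf1y : fmu μ (1 - y) = 1 - θ := by rw [fmu_symm hy01, hfy]
    have := huniq (1 - y) h1y01 hf1y
    rw [hxdef]; linarith
end

section
/- Assume 0 ≤ p < 4/(4+μ) and define F_p(x) = (−x + S(x))·(1 − p − p·S'(x)). Then for every real x, F_p(x) = 0 if and only if S(x) = x; that is, the stationary homogeneous solutions are exactly the fixed points of S. -/
/-- `F_p(x) = (−x + S(x))·(1 − p − p·S'(x))`. -/
noncomputable def Fp (μ θ p x : ℝ) : ℝ :=
  (-x + sigmoid μ θ x) * (1 - p - p * deriv (sigmoid μ θ) x)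

lemma sigmoid_hasDerivAt (μ θ x : ℝ) :
    HasDerivAt (sigmoid μ θ)
      (μ * Real.exp (-μ * (x - θ)) / (1 + Real.exp (-μ * (x - θ)))^2) x := by
  have hpos : (0:ℝ) < 1 + Real.exp (-μ * (x - θ)) := by positivity
  have h1 : HasDerivAt (fun y : ℝ => -μ * (y - θ)) (-μ) x := by
    simpa using ((hasDerivAt_id x).sub_const θ).const_mul (-μ)
  have h2 : HasDerivAt (fun y : ℝ => 1 + Real.exp (-μ * (y - θ)))
      (Real.exp (-μ * (x - θ)) * (-μ)) x := (h1.exp).const_add 1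
  have h3 := h2.inv hpos.ne'
  have heq : sigmoid μ θ = fun y => (1 + Real.exp (-(μ * (y - θ))))⁻¹ := by
    funext y; simp [sigmoid, one_div, neg_mul]
  rw [heq]
  convert h3 using 2 <;> first | rfl | (simp only [Pi.inv_apply]; ring_nf) | ring_nf

lemma deriv_sigmoid (μ θ x : ℝ) :
    deriv (sigmoid μ θ) x
      = μ * Real.exp (-μ * (x - θ)) / (1 + Real.exp (-μ * (x - θ)))^2 :=
  (sigmoid_hasDerivAt μ θ x).deriv

/-- Assume `0 ≤ p < 4/(4+μ)`. Then for every real `x`, `F_p(x) = 0` if and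
only if `S(x) = x`; the stationary homogeneous solutions are exactly the fixed points of
`S`. -/
theorem stmt_10 (μ θ p : ℝ) (hμ : 0 < μ) (hθ : 0 ≤ θ)
    (hp0 : 0 ≤ p) (hp : p < 4 / (4 + μ)) :
    ∀ x : ℝ, Fp μ θ p x = 0 ↔ sigmoid μ θ x = x := by
  intro x
  set e := Real.exp (-μ * (x - θ)) with he
  have hepos : 0 < e := Real.exp_pos _
  have hD : deriv (sigmoid μ θ) x = μ * e / (1 + e)^2 := deriv_sigmoid μ θ x
  have hbound : deriv (sigmoid μ θ) x ≤ μ / 4 := by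
    rw [hD]
    rw [div_le_div_iff₀ (by positivity) (by norm_num)]
    nlinarith [sq_nonneg (1 - e), hμ.le, hepos.le]
  have hDnn : 0 ≤ deriv (sigmoid μ θ) x := by rw [hD]; positivity
  have h4μ : 0 < 4 + μ := by linarith
  have hp' : p * (4 + μ) < 4 := by
    rw [lt_div_iff₀ h4μ] at hp; linarith
  have hfac : 0 < 1 - p - p * deriv (sigmoid μ θ) x := by
    have : p * deriv (sigmoid μ θ) x ≤ p * (μ / 4) :=
      mul_le_mul_of_nonneg_left hbound hp0
    nlinarith
  constructor
  · intro h
    rcases mul_eq_zero.mp h with h1 | h2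
    · linarith [h1]
    · exact absurd h2 (by linarith)
  · intro h
    have : -x + sigmoid μ θ x = 0 := by rw [h]; ring
    simp [Fp, this]
end

section
/- (Comparison principle on ℤ.) Let v, w : [0,∞) → ℝ^ℤ be such that for each j ∈ ℤ the maps t ↦ v_j(t) and t ↦ w_j(t) are continuously differentiable, and suppose there is a constant M > 0 with |v_j(t)| + |w_j(t)| ≤ M for all t ≥ 0 and j ∈ ℤ. Assume that for all t > 0 and all j ∈ ℤ, v_j'(t) ≤ 𝒩(v_{j−1}(t), v_j(t), v_{j+1}(t)) and w_j'(t) ≥ 𝒩(w_{j−1}(t), w_j(t), w_{j+1}(t)). If v_j(0) ≤ w_j(0) for all j ∈ ℤ, then v_j(t) ≤ w_j(t) for all t > 0 and all j ∈ ℤ. -/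
/-- The nonlinearity
`𝒩(u,v,w) = (1−p−q)·(S(u) − v) + p·S'(v)·(u − S(v)) + q·(S(w) − v)`. -/
noncomputable def Nfun (μ θ p q u v w : ℝ) : ℝ :=
  (1 - p - q) * (sigmoid μ θ u - v)
    + p * deriv (sigmoid μ θ) v * (u - sigmoid μ θ v)
    + q * (sigmoid μ θ w - v)

noncomputable def Dz (μ θ x : ℝ) : ℝ := μ * sigmoid μ θ x * (1 - sigmoid μ θ x)

lemma sig_denom_pos (μ θ x : ℝ) : 0 < 1 + Real.exp (-μ * (x - θ)) := by positivity

lemma sig_pos (μ θ x : ℝ) : 0 < sigmoid μ θ x := by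
  unfold sigmoid; positivity

lemma sig_le_one (μ θ x : ℝ) : sigmoid μ θ x ≤ 1 := by
  unfold sigmoid
  rw [div_le_one (sig_denom_pos μ θ x)]
  have := (Real.exp_pos (-μ * (x - θ))).le
  linarith

lemma sig_hasDerivAt (μ θ x : ℝ) : HasDerivAt (sigmoid μ θ) (Dz μ θ x) x := by
  have h1 : HasDerivAt (fun y : ℝ => -μ * (y - θ)) (-μ) x := by
    simpa using ((hasDerivAt_id x).sub_const θ).const_mul (-μ)
  have h2 := h1.exp
  have h3 := (h2.const_add 1).inv (ne_of_gt (sig_denom_pos μ θ x))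
  have heq : (fun y => (1 + Real.exp (-μ * (y - θ)))⁻¹) = sigmoid μ θ := by
    funext y; simp [sigmoid, one_div]
  change HasDerivAt (fun y => (1 + Real.exp (-μ * (y - θ)))⁻¹) _ x at h3
  rw [heq] at h3
  convert h3 using 1
  have hd := sig_denom_pos μ θ x
  set e := Real.exp (-μ * (x - θ))
  have : sigmoid μ θ x = 1 / (1 + e) := rfl
  rw [Dz, this]
  field_simp
  ring

lemma deriv_sig (μ θ x : ℝ) : deriv (sigmoid μ θ) x = Dz μ θ x :=
  (sig_hasDerivAt μ θ x).deriv

lemma sig_mono (μ θ : ℝ) (hμ : 0 ≤ μ) : Monotone (sigmoid μ θ) := by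
  apply monotone_of_deriv_nonneg
  · exact fun x => (sig_hasDerivAt μ θ x).differentiableAt
  · intro x
    rw [deriv_sig]
    have h1 := (sig_pos μ θ x).le
    have h2 := sig_le_one μ θ x
    unfold Dz
    have := mul_nonneg (mul_nonneg hμ h1) (by linarith : (0:ℝ) ≤ 1 - sigmoid μ θ x)
    linarith

lemma Dz_nonneg (μ θ x : ℝ) (hμ : 0 ≤ μ) : 0 ≤ Dz μ θ x := by
  have h1 := (sig_pos μ θ x).le
  have h2 := sig_le_one μ θ x
  unfold Dz
  exact mul_nonneg (mul_nonneg hμ h1) (by linarith)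

lemma Dz_le (μ θ x : ℝ) (hμ : 0 ≤ μ) : Dz μ θ x ≤ μ := by
  have h1 := (sig_pos μ θ x).le
  have h2 := sig_le_one μ θ x
  unfold Dz
  nlinarith [mul_nonneg hμ (sq_nonneg (sigmoid μ θ x - 1/2))]

lemma Dz_hasDerivAt (μ θ x : ℝ) :
    HasDerivAt (Dz μ θ) (μ * Dz μ θ x * (1 - 2 * sigmoid μ θ x)) x := by
  have hS := sig_hasDerivAt μ θ x
  have h : HasDerivAt (fun y => μ * (sigmoid μ θ y * (1 - sigmoid μ θ y)))
      (μ * (Dz μ θ x * (1 - sigmoid μ θ x) + sigmoid μ θ x * (0 - Dz μ θ x))) x :=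
    (hS.mul ((hasDerivAt_const x (1:ℝ)).sub hS)).const_mul μ
  have heq : (fun y => μ * (sigmoid μ θ y * (1 - sigmoid μ θ y))) = Dz μ θ := by
    funext y; rw [Dz]; ring
  rw [heq] at h
  convert h using 1; ring

lemma lip_of_deriv {f f' : ℝ → ℝ} (h : ∀ x, HasDerivAt f (f' x) x) {C : ℝ}
    (hb : ∀ x, |f' x| ≤ C) (a b : ℝ) : |f b - f a| ≤ C * |b - a| := by
  have := convex_univ.norm_image_sub_le_of_norm_hasDerivWithin_le
    (fun x _ => (h x).hasDerivWithinAt) (fun x _ => by simpa [Real.norm_eq_abs] using hb x)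
    (Set.mem_univ a) (Set.mem_univ b)
  simpa [Real.norm_eq_abs] using this

lemma sig_lip (μ θ : ℝ) (hμ : 0 ≤ μ) (a b : ℝ) :
    |sigmoid μ θ b - sigmoid μ θ a| ≤ μ * |b - a| :=
  lip_of_deriv (sig_hasDerivAt μ θ) (fun x => by
    rw [abs_of_nonneg (Dz_nonneg μ θ x hμ)]; exact Dz_le μ θ x hμ) a b

lemma Dz_lip (μ θ : ℝ) (hμ : 0 ≤ μ) (a b : ℝ) :
    |Dz μ θ b - Dz μ θ a| ≤ μ^2 * |b - a| := by
  apply lip_of_deriv (Dz_hasDerivAt μ θ) (fun x => ?_) a b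
  have h1 := (sig_pos μ θ x).le
  have h2 := sig_le_one μ θ x
  have h3 := Dz_nonneg μ θ x hμ
  have h4 := Dz_le μ θ x hμ
  rw [abs_mul, abs_mul, abs_of_nonneg hμ, abs_of_nonneg h3]
  have h5 : |1 - 2 * sigmoid μ θ x| ≤ 1 := by rw [abs_le]; constructor <;> linarith
  calc μ * Dz μ θ x * |1 - 2 * sigmoid μ θ x| ≤ μ * Dz μ θ x * 1 :=
        mul_le_mul_of_nonneg_left h5 (mul_nonneg hμ h3)
    _ ≤ μ^2 := by nlinarith

noncomputable def Pz (μ θ x : ℝ) : ℝ := Dz μ θ x * sigmoid μ θ x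

lemma Pz_hasDerivAt (μ θ x : ℝ) :
    HasDerivAt (Pz μ θ)
      (μ * Dz μ θ x * (1 - 2 * sigmoid μ θ x) * sigmoid μ θ x + Dz μ θ x * Dz μ θ x) x :=
  (Dz_hasDerivAt μ θ x).mul (sig_hasDerivAt μ θ x)

lemma Pz_lip (μ θ : ℝ) (hμ : 0 ≤ μ) (a b : ℝ) :
    |Pz μ θ b - Pz μ θ a| ≤ (2 * μ^2) * |b - a| := by
  apply lip_of_deriv (Pz_hasDerivAt μ θ) (fun x => ?_) a b
  have h1 := (sig_pos μ θ x).le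
  have h2 := sig_le_one μ θ x
  have h3 := Dz_nonneg μ θ x hμ
  have h4 := Dz_le μ θ x hμ
  have h5 : |1 - 2 * sigmoid μ θ x| ≤ 1 := by rw [abs_le]; constructor <;> linarith
  have hA : |μ * Dz μ θ x * (1 - 2 * sigmoid μ θ x) * sigmoid μ θ x| ≤ μ^2 := by
    rw [abs_mul, abs_mul, abs_mul, abs_of_nonneg hμ, abs_of_nonneg h3, abs_of_nonneg h1]
    have e1 : μ * Dz μ θ x * |1 - 2 * sigmoid μ θ x| ≤ μ * Dz μ θ x :=
      mul_le_of_le_one_right (mul_nonneg hμ h3) h5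
    have e2 : μ * Dz μ θ x * |1 - 2 * sigmoid μ θ x| * sigmoid μ θ x
        ≤ μ * Dz μ θ x * |1 - 2 * sigmoid μ θ x| :=
      mul_le_of_le_one_right (mul_nonneg (mul_nonneg hμ h3) (abs_nonneg _)) h2
    nlinarith
  have hB : |Dz μ θ x * Dz μ θ x| ≤ μ^2 := by
    rw [abs_mul, abs_of_nonneg h3]
    nlinarith
  calc |_ + _| ≤ _ := abs_add_le _ _
    _ ≤ 2 * μ^2 := by linarith

set_option maxHeartbeats 1000000 in
lemma Nfun_key (μ θ p q M a b c a' b' c' : ℝ) (hμ : 0 < μ)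
    (hp : 0 ≤ p) (hq0 : 0 ≤ q) (hpq : p + q ≤ 1)
    (hMa : |a'| ≤ M) (hb : b' ≤ b) :
    Nfun μ θ p q a b c - Nfun μ θ p q a' b' c'
      ≤ (2*μ + μ^2*(M+2)) * (max (a - a') 0 + max (c - c') 0 + (b - b')) := by
  have hp1 : p ≤ 1 := by linarith
  have hq1 : q ≤ 1 := by linarith
  have hμ' := hμ.le
  have hbb : (0:ℝ) ≤ b - b' := by linarith
  set Sa := sigmoid μ θ a; set Sa' := sigmoid μ θ a'
  set Sc := sigmoid μ θ c; set Sc' := sigmoid μ θ c'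
  set Db := Dz μ θ b with hDbdef; set Db' := Dz μ θ b' with hDb'def
  have hN : Nfun μ θ p q a b c - Nfun μ θ p q a' b' c'
      = (1 - p - q) * (Sa - Sa') + q * (Sc - Sc') - (1 - p) * (b - b')
        + p * (Db * (a - a')) + p * ((Db - Db') * a') - p * (Pz μ θ b - Pz μ θ b') := by
    simp only [Nfun, deriv_sig, Pz, hDbdef, hDb'def]
    ring
  rw [hN]
  have hDb0 : 0 ≤ Db := Dz_nonneg μ θ b hμ'
  have hDbμ : Db ≤ μ := Dz_le μ θ b hμ'
  have hmax_a : 0 ≤ max (a - a') 0 := le_max_right _ _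
  have hmax_c : 0 ≤ max (c - c') 0 := le_max_right _ _
  have h1 : (1 - p - q) * (Sa - Sa') ≤ μ * max (a - a') 0 := by
    rcases le_total a a' with h | h
    · have hss : Sa ≤ Sa' := sig_mono μ θ hμ' h
      have h0 : (1 - p - q) * (Sa - Sa') ≤ 0 :=
        mul_nonpos_of_nonneg_of_nonpos (by linarith) (by linarith)
      have := mul_nonneg hμ' hmax_a
      linarith
    · have hss : Sa' ≤ Sa := sig_mono μ θ hμ' h
      have hle : Sa - Sa' ≤ μ * (a - a') := by
        have := sig_lip μ θ hμ' a' a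
        rw [abs_of_nonneg (by linarith : (0:ℝ) ≤ a - a')] at this
        calc Sa - Sa' ≤ |Sa - Sa'| := le_abs_self _
          _ ≤ μ * (a - a') := this
      rw [max_eq_left (by linarith : (0:ℝ) ≤ a - a')]
      nlinarith [mul_nonneg (by linarith : (0:ℝ) ≤ p + q) (by linarith : (0:ℝ) ≤ Sa - Sa')]
  have h2 : q * (Sc - Sc') ≤ μ * max (c - c') 0 := by
    rcases le_total c c' with h | h
    · have hss : Sc ≤ Sc' := sig_mono μ θ hμ' h
      have h0 : q * (Sc - Sc') ≤ 0 := mul_nonpos_of_nonneg_of_nonpos hq0 (by linarith)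
      have := mul_nonneg hμ' hmax_c
      linarith
    · have hss : Sc' ≤ Sc := sig_mono μ θ hμ' h
      have hle : Sc - Sc' ≤ μ * (c - c') := by
        have := sig_lip μ θ hμ' c' c
        rw [abs_of_nonneg (by linarith : (0:ℝ) ≤ c - c')] at this
        calc Sc - Sc' ≤ |Sc - Sc'| := le_abs_self _
          _ ≤ μ * (c - c') := this
      rw [max_eq_left (by linarith : (0:ℝ) ≤ c - c')]
      nlinarith [mul_nonneg (by linarith : (0:ℝ) ≤ 1 - q) (by linarith : (0:ℝ) ≤ Sc - Sc')]
  have h3 : -((1 - p) * (b - b')) ≤ 0 := by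
    have := mul_nonneg (by linarith : (0:ℝ) ≤ 1 - p) hbb
    linarith
  have h4a : p * (Db * (a - a')) ≤ μ * max (a - a') 0 := by
    rcases le_total a a' with h | h
    · have h0 : Db * (a - a') ≤ 0 := mul_nonpos_of_nonneg_of_nonpos hDb0 (by linarith)
      have := mul_nonpos_of_nonneg_of_nonpos hp h0
      have := mul_nonneg hμ' hmax_a
      linarith
    · have h0 : Db * (a - a') ≤ μ * (a - a') := mul_le_mul_of_nonneg_right hDbμ (by linarith)
      rw [max_eq_left (by linarith : (0:ℝ) ≤ a - a')]
      nlinarith [mul_nonneg hDb0 (by linarith : (0:ℝ) ≤ a - a'),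
        mul_nonneg (by linarith : (0:ℝ) ≤ 1 - p) (mul_nonneg hDb0 (by linarith : (0:ℝ) ≤ a - a'))]
  have hMnn : (0:ℝ) ≤ M := le_trans (abs_nonneg _) hMa
  have h4b : p * ((Db - Db') * a') ≤ μ^2 * M * (b - b') := by
    have hd : |Db - Db'| ≤ μ^2 * (b - b') := by
      have := Dz_lip μ θ hμ' b' b
      rwa [abs_of_nonneg hbb] at this
    have h0 : (Db - Db') * a' ≤ μ^2 * M * (b - b') := by
      calc (Db - Db') * a' ≤ |(Db - Db') * a'| := le_abs_self _
        _ = |Db - Db'| * |a'| := abs_mul _ _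
        _ ≤ (μ^2 * (b - b')) * M :=
            mul_le_mul hd hMa (abs_nonneg _) (mul_nonneg (sq_nonneg μ) hbb)
        _ = μ^2 * M * (b - b') := by ring
    have hnn : 0 ≤ μ^2 * M * (b - b') := mul_nonneg (mul_nonneg (sq_nonneg μ) hMnn) hbb
    nlinarith [mul_nonneg (by linarith : (0:ℝ) ≤ 1 - p)
      (by linarith : 0 ≤ μ^2 * M * (b - b') - (Db - Db') * a')]
  have h5 : -(p * (Pz μ θ b - Pz μ θ b')) ≤ 2 * μ^2 * (b - b') := by
    have hd : |Pz μ θ b - Pz μ θ b'| ≤ 2 * μ^2 * (b - b') := by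
      have := Pz_lip μ θ hμ' b' b
      rw [abs_of_nonneg hbb] at this
      linarith
    have h6 : -(Pz μ θ b - Pz μ θ b') ≤ 2 * μ^2 * (b - b') := by
      have := neg_abs_le (Pz μ θ b - Pz μ θ b')
      linarith
    have hnn : 0 ≤ 2 * μ^2 * (b - b') := mul_nonneg (by positivity) hbb
    nlinarith [mul_nonneg (by linarith : (0:ℝ) ≤ 1 - p)
      (by linarith : 0 ≤ 2 * μ^2 * (b - b') + (Pz μ θ b - Pz μ θ b'))]
  have e1 : 0 ≤ μ * max (a - a') 0 := mul_nonneg hμ' hmax_a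
  have e2 : 0 ≤ μ * max (c - c') 0 := mul_nonneg hμ' hmax_c
  have e3 : 0 ≤ μ * (b - b') := mul_nonneg hμ' hbb
  have e4 : 0 ≤ μ^2 * (M+2) * (max (a - a') 0) :=
    mul_nonneg (mul_nonneg (sq_nonneg μ) (by linarith)) hmax_a
  have e5 : 0 ≤ μ^2 * (M+2) * (max (c - c') 0) :=
    mul_nonneg (mul_nonneg (sq_nonneg μ) (by linarith)) hmax_c
  nlinarith [h1, h2, h3, h4a, h4b, h5, e1, e2, e3, e4, e5, hbb, hmax_a, hmax_c]


set_option maxHeartbeats 1000000 in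
/-- Comparison principle on `ℤ`. If `v, w : [0,∞) → ℝ^ℤ` are componentwise
`C¹` and uniformly bounded, `v` is a subsolution and `w` a supersolution of the lattice
equation on `ℤ`, and `v_j(0) ≤ w_j(0)` for all `j`, then `v_j(t) ≤ w_j(t)` for all
`t > 0` and `j ∈ ℤ`. -/
theorem stmt_16 (μ θ p q : ℝ) (hμ : 0 < μ) (hθ : 0 ≤ θ)
    (hp : 0 ≤ p) (hq0 : 0 ≤ q) (hq1 : q ≤ 1) (hpq : p + q ≤ 1)
    (v w v' w' : ℝ → ℤ → ℝ)
    -- componentwise continuously differentiable on [0,∞)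
    (hv : ∀ j : ℤ, ∀ t ∈ Set.Ici (0 : ℝ),
      HasDerivWithinAt (fun s => v s j) (v' t j) (Set.Ici (0 : ℝ)) t)
    (hw : ∀ j : ℤ, ∀ t ∈ Set.Ici (0 : ℝ),
      HasDerivWithinAt (fun s => w s j) (w' t j) (Set.Ici (0 : ℝ)) t)
    (hv' : ∀ j : ℤ, ContinuousOn (fun t => v' t j) (Set.Ici (0 : ℝ)))
    (hw' : ∀ j : ℤ, ContinuousOn (fun t => w' t j) (Set.Ici (0 : ℝ)))
    -- uniform bound
    (M : ℝ) (hM : 0 < M)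
    (hbound : ∀ t ∈ Set.Ici (0 : ℝ), ∀ j : ℤ, |v t j| + |w t j| ≤ M)
    -- differential inequalities
    (hsub : ∀ t > (0 : ℝ), ∀ j : ℤ,
      v' t j ≤ Nfun μ θ p q (v t (j - 1)) (v t j) (v t (j + 1)))
    (hsup : ∀ t > (0 : ℝ), ∀ j : ℤ,
      Nfun μ θ p q (w t (j - 1)) (w t j) (w t (j + 1)) ≤ w' t j)
    -- initial ordering
    (hinit : ∀ j : ℤ, v 0 j ≤ w 0 j) :
    ∀ t > (0 : ℝ), ∀ j : ℤ, v t j ≤ w t j := by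
  intro t₀ ht₀ j₀
  set L : ℝ := 2*μ + μ^2*(M+2) with hLdef
  have hL : 0 < L := by nlinarith [sq_nonneg μ]
  set K : ℝ := 5*L + 1 with hKdef
  have hK : 0 < K := by linarith
  set ρ : ℤ → ℝ := fun j => (2:ℝ) ^ (-|j|) with hρdef
  have hρpos : ∀ j, 0 < ρ j := fun j => zpow_pos (by norm_num) _
  have hρ2 : ∀ j j' : ℤ, |j'| ≤ |j| + 1 → ρ j ≤ 2 * ρ j' := by
    intro j j' h
    have h1 : ρ j ≤ (2:ℝ) ^ (1 - |j'|) :=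
      zpow_le_zpow_right₀ (by norm_num) (by omega)
    have h2 : (2:ℝ) ^ (1 - |j'|) = 2 * ρ j' := by
      rw [sub_eq_add_neg, zpow_add₀ (by norm_num : (2:ℝ) ≠ 0), zpow_one]
    linarith
  set u : ℝ → ℤ → ℝ := fun t j => v t j - w t j with hudef
  have hubd : ∀ t ∈ Set.Ici (0:ℝ), ∀ j, u t j ≤ M := by
    intro t ht j
    have := hbound t ht j
    have h1 := le_abs_self (v t j)
    have h2 := neg_abs_le (w t j)
    simp only [hudef]
    linarith
  have hucont : ∀ j, ContinuousOn (fun t => u t j) (Set.Ici (0:ℝ)) := by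
    intro j
    exact fun t ht => ((hv j t ht).sub (hw j t ht)).continuousWithinAt
  -- main claim
  have claim : ∀ ε > (0:ℝ), ∀ t ∈ Set.Icc (0:ℝ) t₀, ∀ j, ρ j * u t j ≤ ε * Real.exp (K * t) := by
    intro ε hε
    by_contra hcon
    push_neg at hcon
    obtain ⟨N, hN⟩ : ∃ N : ℕ, M < ε * (2:ℝ) ^ (N:ℤ) := by
      obtain ⟨N, hN0⟩ := pow_unbounded_of_one_lt (M / ε) (one_lt_two (α := ℝ))
      refine ⟨N, ?_⟩
      rw [zpow_natCast]
      rw [div_lt_iff₀ hε] at hN0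
      linarith
    have hsmall : ∀ j : ℤ, (N:ℤ) < |j| → ∀ t ∈ Set.Icc (0:ℝ) t₀, ρ j * u t j < ε * Real.exp (K * t) := by
      intro j hj t ht
      have hρle : ρ j ≤ (2:ℝ) ^ (-(N+1) : ℤ) :=
        zpow_le_zpow_right₀ (by norm_num) (by omega)
      have h2 : ρ j * u t j ≤ ρ j * M :=
        mul_le_mul_of_nonneg_left (hubd t ht.1 j) (hρpos j).le
      have h25 : (0:ℝ) < (2:ℝ) ^ ((N:ℤ)+1) := zpow_pos (by norm_num) _
      have hle2 : (2:ℝ) ^ (N:ℤ) ≤ (2:ℝ) ^ ((N:ℤ)+1) :=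
        zpow_le_zpow_right₀ (by norm_num) (by omega)
      have h3 : ((2:ℝ) ^ (-(N+1) : ℤ)) * M < ε := by
        rw [zpow_neg, inv_mul_lt_iff₀ h25]
        nlinarith [mul_le_mul_of_nonneg_left hle2 hε.le]
      have h4 : (1:ℝ) ≤ Real.exp (K * t) :=
        Real.one_le_exp (by nlinarith [ht.1])
      have h5 : ρ j * M ≤ ((2:ℝ) ^ (-(N+1) : ℤ)) * M :=
        mul_le_mul_of_nonneg_right hρle hM.le
      nlinarith [h2, h5, h3, h4, hε.le, mul_le_mul_of_nonneg_left h4 hε.le]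
    set Fset : Finset ℤ := Finset.Icc (-(N:ℤ)) (N:ℤ) with hFdef
    have hmemF : ∀ j : ℤ, |j| ≤ (N:ℤ) → j ∈ Fset := by
      intro j hj
      rw [hFdef, Finset.mem_Icc]
      exact abs_le.mp hj
    have hnotF : ∀ j : ℤ, j ∉ Fset → (N:ℤ) < |j| := by
      intro j hj
      by_contra h'
      push_neg at h'
      exact hj (hmemF j h')
    set A : Set ℝ := {t | t ∈ Set.Icc (0:ℝ) t₀ ∧ ∃ j ∈ Fset, ε * Real.exp (K * t) ≤ ρ j * u t j} with hAdef
    have hAne : A.Nonempty := by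
      obtain ⟨t, ht, j, hj⟩ := hcon
      refine ⟨t, ht, j, ?_, hj.le⟩
      by_contra hjF
      exact absurd hj (not_lt.mpr (hsmall j (hnotF j hjF) t ht).le)
    have hAclosed : IsClosed A := by
      have : A = ⋃ j ∈ (Fset : Set ℤ), (Set.Icc (0:ℝ) t₀ ∩
          (fun t => ρ j * u t j - ε * Real.exp (K * t)) ⁻¹' Set.Ici 0) := by
        ext t
        simp only [hAdef, Set.mem_setOf_eq, Set.mem_iUnion, Set.mem_inter_iff, Set.mem_preimage,
          Set.mem_Ici, Finset.mem_coe, exists_prop]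
        constructor
        · rintro ⟨ht, j, hjF, hj⟩; exact ⟨j, hjF, ht, by linarith⟩
        · rintro ⟨j, hjF, ht, hj⟩; exact ⟨ht, j, hjF, by linarith⟩
      rw [this]
      apply Set.Finite.isClosed_biUnion (Fset.finite_toSet)
      intro j _
      apply ContinuousOn.preimage_isClosed_of_isClosed _ isClosed_Icc isClosed_Ici
      apply ContinuousOn.sub
      · exact (((hucont j).mono (fun x hx => hx.1)).const_smul (ρ j))
      · exact (Real.continuous_exp.comp (continuous_const.mul continuous_id)).continuousOn.const_smul ε
    set t₁ : ℝ := sInf A with ht₁def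
    have ht₁A : t₁ ∈ A := hAclosed.csInf_mem hAne ⟨0, fun x hx => hx.1.1⟩
    obtain ⟨ht₁m, j₁, hj₁F, hj₁⟩ := ht₁A
    have ht₁0 : (0:ℝ) ≤ t₁ := ht₁m.1
    have ht₁t₀ : t₁ ≤ t₀ := ht₁m.2
    have ht₁pos : 0 < t₁ := by
      rcases lt_or_eq_of_le ht₁0 with h | h
      · exact h
      · exfalso
        have h0 : u 0 j₁ ≤ 0 := by simp only [hudef]; linarith [hinit j₁]
        have h1 : ρ j₁ * u 0 j₁ ≤ 0 := mul_nonpos_of_nonneg_of_nonpos (hρpos j₁).le h0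
        rw [← h] at hj₁
        simp only [mul_zero, Real.exp_zero, mul_one] at hj₁
        nlinarith
    have hbefore : ∀ s, 0 ≤ s → s < t₁ → ∀ j, ρ j * u s j < ε * Real.exp (K * s) := by
      intro s hs0 hst j
      by_contra hge
      push_neg at hge
      have hsIcc : s ∈ Set.Icc (0:ℝ) t₀ := ⟨hs0, by linarith⟩
      have hjF : j ∈ Fset := by
        by_contra hjF
        exact absurd hge (not_le.mpr (hsmall j (hnotF j hjF) s hsIcc))
      have : s ∈ A := ⟨hsIcc, j, hjF, hge⟩
      have : t₁ ≤ s := csInf_le ⟨0, fun x hx => hx.1.1⟩ this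
      linarith
    have hatt : ∀ j, ρ j * u t₁ j ≤ ε * Real.exp (K * t₁) := by
      intro j
      set g : ℝ → ℝ := fun s => ρ j * u s j - ε * Real.exp (K * s) with hgdef
      have hgc : ContinuousWithinAt g (Set.Ici 0) t₁ := by
        apply ContinuousWithinAt.sub
        · exact ((hucont j) t₁ ht₁0).const_smul (ρ j)
        · exact ((Real.continuous_exp.comp (continuous_const.mul continuous_id)).continuousWithinAt).const_smul ε
      have hmono : nhdsWithin t₁ (Set.Ico 0 t₁) ≤ nhdsWithin t₁ (Set.Ici 0) :=
        nhdsWithin_mono _ (fun x hx => hx.1)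
      have htend : Filter.Tendsto g (nhdsWithin t₁ (Set.Ico 0 t₁)) (nhds (g t₁)) :=
        hgc.tendsto.mono_left hmono
      rw [nhdsWithin_Ico_eq_nhdsLT ht₁pos] at htend
      have hev : ∀ᶠ s in nhdsWithin t₁ (Set.Iio t₁), g s ≤ 0 := by
        filter_upwards [Ioo_mem_nhdsLT_of_mem (⟨ht₁pos, le_refl t₁⟩ : t₁ ∈ Set.Ioc 0 t₁)] with s hs
        have := hbefore s hs.1.le hs.2 j
        simp only [hgdef]
        linarith
      have := le_of_tendsto htend hev
      simp only [hgdef] at this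
      linarith
    set c : ℝ := ε * Real.exp (K * t₁) with hcdef
    have hc : 0 < c := by positivity
    have heq : ρ j₁ * u t₁ j₁ = c := le_antisymm (hatt j₁) hj₁
    have hup : 0 < u t₁ j₁ := by
      rcases le_or_gt (u t₁ j₁) 0 with h | h
      · exfalso
        have := mul_nonpos_of_nonneg_of_nonpos (hρpos j₁).le h
        nlinarith
      · exact h
    -- derivative of h at t₁
    have hIci : Set.Ici (0:ℝ) ∈ nhds t₁ := Ici_mem_nhds ht₁pos
    have hd1 : HasDerivAt (fun s => u s j₁) (v' t₁ j₁ - w' t₁ j₁) t₁ :=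
      (((hv j₁ t₁ ht₁0).sub (hw j₁ t₁ ht₁0))).hasDerivAt hIci
    have hd2 : HasDerivAt (fun s : ℝ => ε * Real.exp (K * s)) (ε * (Real.exp (K * t₁) * K)) t₁ := by
      have : HasDerivAt (fun s : ℝ => K * s) K t₁ := by
        simpa using (hasDerivAt_id t₁).const_mul K
      exact (this.exp).const_mul ε
    set D : ℝ := ρ j₁ * (v' t₁ j₁ - w' t₁ j₁) - ε * (Real.exp (K * t₁) * K) with hDdef
    have hd : HasDerivAt (fun s => ρ j₁ * u s j₁ - ε * Real.exp (K * s)) D t₁ :=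
      (hd1.const_mul (ρ j₁)).sub hd2
    have hslope : 0 ≤ D := by
      have ht := hasDerivAt_iff_tendsto_slope.mp hd
      have hmono : nhdsWithin t₁ (Set.Iio t₁) ≤ nhdsWithin t₁ {t₁}ᶜ :=
        nhdsWithin_mono _ (fun x hx => ne_of_lt hx)
      apply ge_of_tendsto (ht.mono_left hmono)
      filter_upwards [Ioo_mem_nhdsLT_of_mem (⟨ht₁pos, le_refl t₁⟩ : t₁ ∈ Set.Ioc 0 t₁)] with s hs
      have hs0 : ρ j₁ * u s j₁ - ε * Real.exp (K * s) ≤ 0 := by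
        have := hbefore s hs.1.le hs.2 j₁
        linarith
      have hst : ρ j₁ * u t₁ j₁ - ε * Real.exp (K * t₁) = 0 := by
        rw [heq, hcdef]; ring
      rw [slope_def_field]
      have hden : s - t₁ ≤ 0 := by linarith [hs.2]
      have hnum : (fun s => ρ j₁ * u s j₁ - ε * Real.exp (K * s)) s
          - (fun s => ρ j₁ * u s j₁ - ε * Real.exp (K * s)) t₁ ≤ 0 := by
        simp only
        linarith [hs0, hst]
      exact div_nonneg_iff.mpr (Or.inr ⟨hnum, hden⟩)
    -- now estimate D from above
    have hbb : w t₁ j₁ ≤ v t₁ j₁ := by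
      have : u t₁ j₁ = v t₁ j₁ - w t₁ j₁ := rfl
      linarith
    have hMa : |w t₁ (j₁ - 1)| ≤ M := by
      have := hbound t₁ ht₁0 (j₁ - 1)
      linarith [abs_nonneg (v t₁ (j₁ - 1))]
    have hvw' : v' t₁ j₁ - w' t₁ j₁ ≤
        Nfun μ θ p q (v t₁ (j₁-1)) (v t₁ j₁) (v t₁ (j₁+1))
          - Nfun μ θ p q (w t₁ (j₁-1)) (w t₁ j₁) (w t₁ (j₁+1)) := by
      linarith [hsub t₁ ht₁pos j₁, hsup t₁ ht₁pos j₁]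
    have hkey := Nfun_key μ θ p q M (v t₁ (j₁-1)) (v t₁ j₁) (v t₁ (j₁+1))
      (w t₁ (j₁-1)) (w t₁ j₁) (w t₁ (j₁+1)) hμ hp hq0 hpq hMa hbb
    have hnbr : ∀ j' : ℤ, ρ j₁ ≤ 2 * ρ j' → ρ j₁ * max (u t₁ j') 0 ≤ 2 * c := by
      intro j' hj'
      rcases le_total (u t₁ j') 0 with h | h
      · rw [max_eq_right h, mul_zero]
        linarith
      · rw [max_eq_left h]
        have h1 : ρ j₁ * u t₁ j' ≤ 2 * ρ j' * u t₁ j' := mul_le_mul_of_nonneg_right hj' h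
        have h2 : ρ j' * u t₁ j' ≤ c := hatt j'
        nlinarith [hρpos j']
    have hXa : ρ j₁ * max (v t₁ (j₁-1) - w t₁ (j₁-1)) 0 ≤ 2 * c := by
      have habs : |j₁ - 1| ≤ |j₁| + 1 := by
        rcases abs_cases j₁ with ⟨h1,h2⟩|⟨h1,h2⟩ <;>
          rcases abs_cases (j₁-1) with ⟨g1,g2⟩|⟨g1,g2⟩ <;> omega
      have := hnbr (j₁ - 1) (hρ2 j₁ (j₁-1) habs)
      simpa [hudef] using this
    have hXc : ρ j₁ * max (v t₁ (j₁+1) - w t₁ (j₁+1)) 0 ≤ 2 * c := by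
      have habs : |j₁ + 1| ≤ |j₁| + 1 := by
        rcases abs_cases j₁ with ⟨h1,h2⟩|⟨h1,h2⟩ <;>
          rcases abs_cases (j₁+1) with ⟨g1,g2⟩|⟨g1,g2⟩ <;> omega
      have := hnbr (j₁ + 1) (hρ2 j₁ (j₁+1) habs)
      simpa [hudef] using this
    have hfinal : ρ j₁ * (v' t₁ j₁ - w' t₁ j₁) ≤ L * (5 * c) := by
      calc ρ j₁ * (v' t₁ j₁ - w' t₁ j₁)
          ≤ ρ j₁ * (L * (max (v t₁ (j₁-1) - w t₁ (j₁-1)) 0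
              + max (v t₁ (j₁+1) - w t₁ (j₁+1)) 0 + (v t₁ j₁ - w t₁ j₁))) :=
            mul_le_mul_of_nonneg_left (le_trans hvw' hkey) (hρpos j₁).le
        _ = L * (ρ j₁ * max (v t₁ (j₁-1) - w t₁ (j₁-1)) 0
              + ρ j₁ * max (v t₁ (j₁+1) - w t₁ (j₁+1)) 0 + ρ j₁ * (v t₁ j₁ - w t₁ j₁)) := by ring
        _ ≤ L * (2 * c + 2 * c + c) := by
            apply mul_le_mul_of_nonneg_left _ hL.le
            have hbc : ρ j₁ * (v t₁ j₁ - w t₁ j₁) = c := heq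
            linarith only [hXa, hXc, hbc]
        _ = L * (5 * c) := by ring
    have hD2 : K * c ≤ ρ j₁ * (v' t₁ j₁ - w' t₁ j₁) := by
      have he : ε * (Real.exp (K * t₁) * K) = K * c := by rw [hcdef]; ring
      simp only [hDdef] at hslope
      linarith only [hslope, he]
    have hcontr : (5*L+1) * c ≤ L * (5 * c) := by
      have hKK : K = 5*L+1 := hKdef
      calc (5*L+1) * c = K * c := by rw [hKK]
        _ ≤ ρ j₁ * (v' t₁ j₁ - w' t₁ j₁) := hD2
        _ ≤ L * (5 * c) := hfinal
    nlinarith [hcontr, hc]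
  -- conclude
  have hfin : v t₀ j₀ - w t₀ j₀ ≤ 0 := by
    by_contra hcon
    push_neg at hcon
    set δ : ℝ := v t₀ j₀ - w t₀ j₀ with hδdef
    have hexp : 0 < Real.exp (K * t₀) := Real.exp_pos _
    have hε : 0 < δ * ρ j₀ / (2 * Real.exp (K * t₀)) := by
      have := hρpos j₀
      positivity
    have h1 := claim _ hε t₀ ⟨ht₀.le, le_refl t₀⟩ j₀
    have h2 : (δ * ρ j₀ / (2 * Real.exp (K * t₀))) * Real.exp (K * t₀) = δ * ρ j₀ / 2 := by
      field_simp
    have h3 : ρ j₀ * u t₀ j₀ = ρ j₀ * δ := rfl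
    rw [h3, h2] at h1
    nlinarith [hρpos j₀]
  linarith
end

section
/- (Invariance of the interval between two stationary states, semi-infinite network.) Let a ≤ b be real numbers with S(a) = a and S(b) = b. Let v : [0,∞) → ℝ^ℕ be such that for each j ∈ ℕ the map t ↦ v_j(t) is continuously differentiable and uniformly bounded, satisfying v_j'(t) = 𝒩(v_{j−1}(t), v_j(t), v_{j+1}(t)) for all t > 0 and j ≥ 1. If v_0(t) ∈ [a, b] for all t ≥ 0 and v_j(0) ∈ [a, b] for all j ≥ 1, then v_j(t) ∈ [a, b] for all t > 0 and all j ≥ 1. -/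
noncomputable def sigd (μ θ x : ℝ) : ℝ :=
  μ * Real.exp (-μ * (x - θ)) / (1 + Real.exp (-μ * (x - θ)))^2

lemma sigmoid_hasDerivAt_s18 (μ θ x : ℝ) : HasDerivAt (sigmoid μ θ) (sigd μ θ x) x := by
  have h1 : HasDerivAt (fun y : ℝ => -μ * (y - θ)) (-μ) x := by
    simpa using ((hasDerivAt_id x).sub_const θ).const_mul (-μ)
  have h2 : HasDerivAt (fun y : ℝ => 1 + Real.exp (-μ * (y - θ)))
      (Real.exp (-μ * (x - θ)) * (-μ)) x := (h1.exp).const_add 1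
  have h3 := h2.inv (ne_of_gt (sig_denom_pos μ θ x))
  convert h3 using 1
  · rfl
  · rfl
  · ext y; simp [sigmoid, one_div]
  · unfold sigd; field_simp

lemma deriv_sigmoid_s18 (μ θ x : ℝ) : deriv (sigmoid μ θ) x = sigd μ θ x :=
  (sigmoid_hasDerivAt_s18 μ θ x).deriv

lemma sigd_nonneg (μ θ x : ℝ) (hμ : 0 ≤ μ) : 0 ≤ sigd μ θ x := by
  unfold sigd; positivity

lemma sigd_le (μ θ x : ℝ) (hμ : 0 ≤ μ) : sigd μ θ x ≤ μ / 4 := by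
  unfold sigd
  rw [div_le_iff₀ (by positivity)]
  have he : 0 < Real.exp (-μ * (x - θ)) := Real.exp_pos _
  nlinarith [sq_nonneg (1 - Real.exp (-μ * (x - θ))), he]

lemma sigmoid_mono (μ θ : ℝ) (hμ : 0 < μ) {x y : ℝ} (h : x ≤ y) :
    sigmoid μ θ x ≤ sigmoid μ θ y := by
  unfold sigmoid
  have : Real.exp (-μ * (y - θ)) ≤ Real.exp (-μ * (x - θ)) := by
    apply Real.exp_le_exp.2; nlinarith
  have h2 := sig_denom_pos μ θ y
  have h1 := sig_denom_pos μ θ x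
  apply one_div_le_one_div_of_le h2 (by linarith)

lemma sigmoid_lip (μ θ : ℝ) (hμ : 0 ≤ μ) (x y : ℝ) :
    |sigmoid μ θ y - sigmoid μ θ x| ≤ μ / 4 * |y - x| := by
  have := Convex.norm_image_sub_le_of_norm_hasDerivWithin_le
    (f := sigmoid μ θ) (f' := sigd μ θ) (s := Set.univ) (C := μ / 4)
    (fun z _ => (sigmoid_hasDerivAt_s18 μ θ z).hasDerivWithinAt)
    (fun z _ => by rw [Real.norm_eq_abs, abs_of_nonneg (sigd_nonneg μ θ z hμ)]
                   exact sigd_le μ θ z hμ)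
    convex_univ (Set.mem_univ x) (Set.mem_univ y)
  simpa [Real.norm_eq_abs] using this

lemma sig_le (μ θ b u d : ℝ) (hμ : 0 < μ) (hb : sigmoid μ θ b = b)
    (hd : 0 ≤ d) (hu : u ≤ b + d) : sigmoid μ θ u ≤ b + μ / 4 * d := by
  rcases le_total u b with h | h
  · have := sigmoid_mono μ θ hμ h
    nlinarith
  · have hl := sigmoid_lip μ θ hμ.le b u
    rw [abs_of_nonneg (show (0:ℝ) ≤ u - b by linarith)] at hl
    have : sigmoid μ θ u - sigmoid μ θ b ≤ μ / 4 * (u - b) := (abs_le.1 hl).2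
    nlinarith

lemma sig_ge (μ θ a u d : ℝ) (hμ : 0 < μ) (ha : sigmoid μ θ a = a)
    (hd : 0 ≤ d) (hu : a - d ≤ u) : a - μ / 4 * d ≤ sigmoid μ θ u := by
  rcases le_total a u with h | h
  · have := sigmoid_mono μ θ hμ h
    nlinarith
  · have hl := sigmoid_lip μ θ hμ.le u a
    rw [abs_of_nonneg (show (0:ℝ) ≤ a - u by linarith)] at hl
    have : sigmoid μ θ a - sigmoid μ θ u ≤ μ / 4 * (a - u) := (abs_le.1 hl).2
    nlinarith

lemma Nfun_upper (μ θ p q b u w d : ℝ) (hμ : 0 < μ) (hp : 0 ≤ p) (hq0 : 0 ≤ q)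
    (hpq : p + q ≤ 1) (hb : sigmoid μ θ b = b) (hd : 0 < d)
    (hu : u ≤ b + d) (hw : w ≤ b + 4 * d) :
    Nfun μ θ p q u (b + 2 * d) w ≤ μ * d := by
  set V := b + 2 * d with hV
  have hSv : b ≤ sigmoid μ θ V := by
    rw [← hb]; exact sigmoid_mono μ θ hμ (by simp [hV]; linarith)
  have hA : sigmoid μ θ u - V ≤ μ * d := by
    have := sig_le μ θ b u d hμ hb hd.le hu
    nlinarith
  have hC : sigmoid μ θ w - V ≤ μ * d := by
    have := sig_le μ θ b w (4 * d) hμ hb (by linarith) hw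
    nlinarith
  have hB : p * deriv (sigmoid μ θ) V * (u - sigmoid μ θ V) ≤ p * (μ * d) := by
    rw [deriv_sigmoid_s18]
    have h1 := sigd_nonneg μ θ V hμ.le
    have h2 := sigd_le μ θ V hμ.le
    have h3 : u - sigmoid μ θ V ≤ d := by linarith
    nlinarith [mul_nonneg hp h1, mul_nonneg hp hd.le,
      mul_le_mul_of_nonneg_left h3 (mul_nonneg hp h1)]
  have h1pq : 0 ≤ 1 - p - q := by linarith
  have e1 := mul_le_mul_of_nonneg_left hA h1pq
  have e3 := mul_le_mul_of_nonneg_left hC hq0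
  have : (1 - p - q) * (μ * d) + p * (μ * d) + q * (μ * d) = μ * d := by ring
  unfold Nfun
  linarith

lemma Nfun_lower (μ θ p q a u w d : ℝ) (hμ : 0 < μ) (hp : 0 ≤ p) (hq0 : 0 ≤ q)
    (hpq : p + q ≤ 1) (ha : sigmoid μ θ a = a) (hd : 0 < d)
    (hu : a - d ≤ u) (hw : a - 4 * d ≤ w) :
    -(μ * d) ≤ Nfun μ θ p q u (a - 2 * d) w := by
  set V := a - 2 * d with hV
  have hSv : sigmoid μ θ V ≤ a := by
    rw [← ha]; exact sigmoid_mono μ θ hμ (by simp [hV]; linarith)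
  have hA : -(μ * d) ≤ sigmoid μ θ u - V := by
    have := sig_ge μ θ a u d hμ ha hd.le hu
    nlinarith
  have hC : -(μ * d) ≤ sigmoid μ θ w - V := by
    have := sig_ge μ θ a w (4 * d) hμ ha (by linarith) hw
    nlinarith
  have hB : -(p * (μ * d)) ≤ p * deriv (sigmoid μ θ) V * (u - sigmoid μ θ V) := by
    rw [deriv_sigmoid_s18]
    have h1 := sigd_nonneg μ θ V hμ.le
    have h2 := sigd_le μ θ V hμ.le
    have h3 : -d ≤ u - sigmoid μ θ V := by linarith
    nlinarith [mul_nonneg hp h1, mul_nonneg hp hd.le,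
      mul_le_mul_of_nonneg_left h3 (mul_nonneg hp h1)]
  have h1pq : 0 ≤ 1 - p - q := by linarith
  have e1 := mul_le_mul_of_nonneg_left hA h1pq
  have e3 := mul_le_mul_of_nonneg_left hC hq0
  have : (1 - p - q) * -(μ * d) + -(p * (μ * d)) + q * -(μ * d) = -(μ * d) := by ring
  unfold Nfun
  linarith

open Topology Filter in
lemma _slope_flip_dummy : True := trivial

open Topology Filter

lemma slope_flip {x y c : ℝ} (hc : c < 0) (hxy : x ≤ y) : y / c ≤ x / c := by
  have h := div_nonpos_of_nonneg_of_nonpos (sub_nonneg.2 hxy) hc.le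
  rw [sub_div] at h; linarith

set_option maxHeartbeats 1000000 in
/-- Invariance of the interval between two stationary states on the
semi-infinite network. If `a ≤ b` are fixed points of `S`, `v` is a componentwise `C¹`,
uniformly bounded solution of the lattice equation for `j ≥ 1`, the boundary datum
satisfies `v_0(t) ∈ [a,b]` for all `t ≥ 0` and the initial datum satisfies
`v_j(0) ∈ [a,b]` for all `j ≥ 1`, then `v_j(t) ∈ [a,b]` for all `t > 0` and `j ≥ 1`. -/
theorem stmt_18 (μ θ p q : ℝ) (hμ : 0 < μ) (hθ : 0 ≤ θ)
    (hp : 0 ≤ p) (hq0 : 0 ≤ q) (hq1 : q ≤ 1) (hpq : p + q ≤ 1)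
    (a b : ℝ) (hab : a ≤ b) (ha : sigmoid μ θ a = a) (hb : sigmoid μ θ b = b)
    (v v' : ℝ → ℕ → ℝ)
    -- componentwise continuously differentiable on [0,∞)
    (hv : ∀ j : ℕ, ∀ t ∈ Set.Ici (0 : ℝ),
      HasDerivWithinAt (fun s => v s j) (v' t j) (Set.Ici (0 : ℝ)) t)
    (hv' : ∀ j : ℕ, ContinuousOn (fun t => v' t j) (Set.Ici (0 : ℝ)))
    -- uniform bound
    (M : ℝ) (hM : 0 < M)
    (hbound : ∀ t ∈ Set.Ici (0 : ℝ), ∀ j : ℕ, |v t j| ≤ M)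
    -- the lattice equation for j ≥ 1
    (heq : ∀ t > (0 : ℝ), ∀ j : ℕ, 1 ≤ j →
      v' t j = Nfun μ θ p q (v t (j - 1)) (v t j) (v t (j + 1)))
    -- boundary datum
    (hbdry : ∀ t ∈ Set.Ici (0 : ℝ), v t 0 ∈ Set.Icc a b)
    -- initial datum
    (hinit : ∀ j : ℕ, 1 ≤ j → v 0 j ∈ Set.Icc a b) :
    ∀ t > (0 : ℝ), ∀ j : ℕ, 1 ≤ j → v t j ∈ Set.Icc a b := by
  have hcont : ∀ j, ContinuousOn (fun t => v t j) (Set.Ici (0:ℝ)) :=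
    fun j t ht => (hv j t ht).continuousWithinAt
  set K : ℝ := μ + 1 with hKdef
  have hK : 0 < K := by positivity
  have key : ∀ ε > (0:ℝ), ∀ t ∈ Set.Ici (0:ℝ), ∀ j : ℕ, 1 ≤ j →
      a - ε * 2 ^ j * Real.exp (K * t) < v t j ∧
      v t j < b + ε * 2 ^ j * Real.exp (K * t) := by
    intro ε hε
    by_contra hcon
    push_neg at hcon
    obtain ⟨t₁, ht₁, j₁, hj₁, hbad₁⟩ := hcon
    -- choose the cutoff J
    obtain ⟨J, hJ2⟩ := pow_unbounded_of_one_lt ((M + |a| + |b|) / ε) one_lt_two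
    have hJ : M + |a| + |b| < ε * 2 ^ J := by
      rw [div_lt_iff₀ hε] at hJ2; linarith
    have hfar : ∀ t, 0 ≤ t → ∀ j : ℕ, J ≤ j →
        a - ε * 2 ^ j * Real.exp (K * t) < v t j ∧
        v t j < b + ε * 2 ^ j * Real.exp (K * t) := by
      intro t ht j hj
      have h2 : (2:ℝ) ^ J ≤ 2 ^ j := pow_le_pow_right₀ one_le_two hj
      have he : 1 ≤ Real.exp (K * t) := Real.one_le_exp (mul_nonneg hK.le ht)
      have hbig : M + |a| + |b| < ε * 2 ^ j * Real.exp (K * t) := by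
        have h3 : ε * 2 ^ J ≤ ε * 2 ^ j := by nlinarith
        have h4 : ε * 2 ^ j ≤ ε * 2 ^ j * Real.exp (K * t) := by
          have : (0:ℝ) < ε * 2 ^ j := by positivity
          nlinarith
        linarith
      have hvb := abs_le.1 (hbound t ht j)
      constructor
      · have := le_abs_self a
        have := abs_nonneg b
        linarith [hvb.1]
      · have := neg_abs_le b
        have := abs_nonneg a
        linarith [hvb.2]
    -- the bad set
    set Bad : Set ℝ := ⋃ j ∈ Set.Icc 1 J, (Set.Icc 0 t₁ ∩
        {t | v t j ≤ a - ε * 2 ^ j * Real.exp (K * t) ∨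
             b + ε * 2 ^ j * Real.exp (K * t) ≤ v t j}) with hBadDef
    have hmemBad : ∀ t : ℝ, t ∈ Bad ↔ ∃ j : ℕ, 1 ≤ j ∧ j ≤ J ∧ t ∈ Set.Icc 0 t₁ ∧
        (v t j ≤ a - ε * 2 ^ j * Real.exp (K * t) ∨
         b + ε * 2 ^ j * Real.exp (K * t) ≤ v t j) := by
      intro t
      simp only [hBadDef, Set.mem_iUnion, Set.mem_Icc, Set.mem_inter_iff, Set.mem_setOf_eq]
      constructor
      · rintro ⟨k, ⟨hk1, hk2⟩, ⟨hk3, hk4⟩, hk5⟩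
        exact ⟨k, hk1, hk2, ⟨hk3, hk4⟩, hk5⟩
      · rintro ⟨k, hk1, hk2, ⟨hk3, hk4⟩, hk5⟩
        exact ⟨k, ⟨hk1, hk2⟩, ⟨hk3, hk4⟩, hk5⟩
    have hclosed : IsClosed Bad := by
      apply Set.Finite.isClosed_biUnion (Set.finite_Icc 1 J)
      intro j _
      have hexp : ContinuousOn (fun t : ℝ => Real.exp (K * t)) (Set.Icc 0 t₁) := by
        fun_prop
      have hc1 : ContinuousOn
          (fun t => v t j - (a - ε * 2 ^ j * Real.exp (K * t))) (Set.Icc 0 t₁) := by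
        rcases le_or_gt 0 t₁ with h | h
        · exact ((hcont j).mono (Set.Icc_subset_Ici_self)).sub
            (continuousOn_const.sub ((continuousOn_const.mul hexp)))
        · rw [Set.Icc_eq_empty (by linarith)]; exact continuousOn_empty _
      have hc2 : ContinuousOn
          (fun t => v t j - (b + ε * 2 ^ j * Real.exp (K * t))) (Set.Icc 0 t₁) := by
        rcases le_or_gt 0 t₁ with h | h
        · exact ((hcont j).mono (Set.Icc_subset_Ici_self)).sub
            (continuousOn_const.add ((continuousOn_const.mul hexp)))
        · rw [Set.Icc_eq_empty (by linarith)]; exact continuousOn_empty _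
      have e1 : IsClosed (Set.Icc 0 t₁ ∩
          (fun t => v t j - (a - ε * 2 ^ j * Real.exp (K * t))) ⁻¹' Set.Iic 0) :=
        hc1.preimage_isClosed_of_isClosed isClosed_Icc isClosed_Iic
      have e2 : IsClosed (Set.Icc 0 t₁ ∩
          (fun t => v t j - (b + ε * 2 ^ j * Real.exp (K * t))) ⁻¹' Set.Ici 0) :=
        hc2.preimage_isClosed_of_isClosed isClosed_Icc isClosed_Ici
      convert e1.union e2 using 1
      ext t
      simp only [Set.mem_inter_iff, Set.mem_union, Set.mem_preimage, Set.mem_setOf_eq,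
        Set.mem_Iic, Set.mem_Ici, sub_nonpos, sub_nonneg]
      tauto
    have hBadsub : Bad ⊆ Set.Icc 0 t₁ := by
      intro t ht; exact ((hmemBad t).1 ht).choose_spec.2.2.1
    have hbdd : BddBelow Bad := ⟨0, fun t ht => (hBadsub ht).1⟩
    -- t₁ is bad
    have hj₁J : j₁ ≤ J := by
      by_contra hcJ
      push_neg at hcJ
      have h := hfar t₁ ht₁ j₁ hcJ.le
      exact absurd (hbad₁ h.1) (not_le.2 h.2)
    have hdisj₁ : v t₁ j₁ ≤ a - ε * 2 ^ j₁ * Real.exp (K * t₁) ∨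
        b + ε * 2 ^ j₁ * Real.exp (K * t₁) ≤ v t₁ j₁ := by
      rcases lt_or_ge (a - ε * 2 ^ j₁ * Real.exp (K * t₁)) (v t₁ j₁) with h | h
      · exact Or.inr (hbad₁ h)
      · exact Or.inl h
    have hne : Bad.Nonempty :=
      ⟨t₁, (hmemBad t₁).2 ⟨j₁, hj₁, hj₁J, ⟨ht₁, le_refl t₁⟩, hdisj₁⟩⟩
    set t₀ : ℝ := sInf Bad with ht₀def
    have ht₀Bad : t₀ ∈ Bad := hclosed.csInf_mem hne hbdd
    obtain ⟨j, hj1, hjJ, ⟨ht₀0, ht₀t₁⟩, hdisj⟩ := (hmemBad t₀).1 ht₀Bad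
    have hεj : (0:ℝ) < ε * 2 ^ j := by positivity
    have ht₀pos : 0 < t₀ := by
      rcases eq_or_lt_of_le ht₀0 with h0 | h0
      · exfalso
        obtain ⟨hia, hib⟩ := hinit j hj1
        rw [← h0] at hdisj
        rw [mul_zero, Real.exp_zero, mul_one] at hdisj
        rcases hdisj with h | h <;> linarith
      · exact h0
    -- before t₀ everything is strictly inside
    have hbefore : ∀ t, 0 ≤ t → t < t₀ → ∀ k : ℕ, 1 ≤ k →
        a - ε * 2 ^ k * Real.exp (K * t) < v t k ∧
        v t k < b + ε * 2 ^ k * Real.exp (K * t) := by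
      intro t ht htlt k hk
      rcases le_or_gt J k with hJk | hkJ
      · exact hfar t ht k hJk
      · by_contra hcontra
        have hmem : t ∈ Bad := by
          refine (hmemBad t).2 ⟨k, hk, hkJ.le, ⟨ht, le_trans htlt.le ht₀t₁⟩, ?_⟩
          rcases not_and_or.1 hcontra with h | h
          · exact Or.inl (not_lt.1 h)
          · exact Or.inr (not_lt.1 h)
        exact absurd (csInf_le hbdd hmem) (not_le.2 htlt)
    -- left limit filter
    have hIci_mem : Set.Ici (0:ℝ) ∈ 𝓝[Set.Iio t₀] t₀ :=
      mem_nhdsWithin_of_mem_nhds (Ici_mem_nhds ht₀pos)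
    have hll : 𝓝[Set.Iio t₀] t₀ ≤ 𝓝[Set.Ici (0:ℝ)] t₀ := nhdsWithin_le_of_mem hIci_mem
    have hat : ∀ k : ℕ, 1 ≤ k →
        a - ε * 2 ^ k * Real.exp (K * t₀) ≤ v t₀ k ∧
        v t₀ k ≤ b + ε * 2 ^ k * Real.exp (K * t₀) := by
      intro k hk
      have hvt : Filter.Tendsto (fun t => v t k) (𝓝[Set.Iio t₀] t₀) (𝓝 (v t₀ k)) :=
        (hcont k t₀ ht₀0).mono_left hll
      have hcψ : Continuous (fun t : ℝ => Real.exp (K * t)) := by fun_prop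
      constructor
      · have hψ : Filter.Tendsto (fun t => a - ε * 2 ^ k * Real.exp (K * t))
            (𝓝[Set.Iio t₀] t₀) (𝓝 (a - ε * 2 ^ k * Real.exp (K * t₀))) :=
          ((continuous_const.sub (continuous_const.mul hcψ)).tendsto t₀).mono_left
            nhdsWithin_le_nhds
        refine le_of_tendsto_of_tendsto hψ hvt ?_
        filter_upwards [hIci_mem, self_mem_nhdsWithin] with t ht hlt
        exact (hbefore t ht hlt k hk).1.le
      · have hψ : Filter.Tendsto (fun t => b + ε * 2 ^ k * Real.exp (K * t))
            (𝓝[Set.Iio t₀] t₀) (𝓝 (b + ε * 2 ^ k * Real.exp (K * t₀))) :=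
          ((continuous_const.add (continuous_const.mul hcψ)).tendsto t₀).mono_left
            nhdsWithin_le_nhds
        refine le_of_tendsto_of_tendsto hvt hψ ?_
        filter_upwards [hIci_mem, self_mem_nhdsWithin] with t ht hlt
        exact (hbefore t ht hlt k hk).2.le
    -- slope of v at t₀ from the left
    have hmemD : Set.Ici (0:ℝ) \ {t₀} ∈ 𝓝[Set.Iio t₀] t₀ := by
      filter_upwards [hIci_mem, self_mem_nhdsWithin] with t ht hlt
      exact ⟨ht, ne_of_lt hlt⟩
    have hsv : Filter.Tendsto (slope (fun s => v s j) t₀) (𝓝[Set.Iio t₀] t₀)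
        (𝓝 (v' t₀ j)) :=
      (hasDerivWithinAt_iff_tendsto_slope.1 (hv j t₀ ht₀0)).mono_left
        (nhdsWithin_le_of_mem hmemD)
    have hmemC : ({t₀}ᶜ : Set ℝ) ∈ 𝓝[Set.Iio t₀] t₀ := by
      filter_upwards [self_mem_nhdsWithin] with t hlt
      exact ne_of_lt hlt
    -- the exponential comparison function and its derivative
    have hψd : ∀ c : ℝ, HasDerivAt (fun t : ℝ => c + ε * 2 ^ j * Real.exp (K * t))
        (ε * 2 ^ j * (Real.exp (K * t₀) * K)) t₀ := by
      intro c
      have h1 : HasDerivAt (fun t : ℝ => K * t) K t₀ := by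
        simpa using (hasDerivAt_id t₀).const_mul K
      exact ((h1.exp).const_mul (ε * 2 ^ j)).const_add c
    set E : ℝ := Real.exp (K * t₀) with hEdef
    have hE : 0 < E := Real.exp_pos _
    set d : ℝ := ε * 2 ^ (j - 1) * E with hddef
    have hd : 0 < d := by positivity
    have h2j : (2:ℝ) ^ j = 2 * 2 ^ (j - 1) := by
      rw [mul_comm, ← pow_succ]; congr 1; omega
    have h2j1 : (2:ℝ) ^ (j + 1) = 4 * 2 ^ (j - 1) := by
      rw [show (4:ℝ) = 2 ^ 2 by norm_num, mul_comm, ← pow_add]; congr 1; omega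
    have heqN := heq t₀ ht₀pos j hj1
    have hw : v t₀ (j + 1) ≤ b + 4 * d ∧ a - 4 * d ≤ v t₀ (j + 1) := by
      have h := hat (j + 1) (by omega)
      rw [h2j1] at h
      constructor <;> [nlinarith [h.2]; nlinarith [h.1]]
    have hu : v t₀ (j - 1) ≤ b + d ∧ a - d ≤ v t₀ (j - 1) := by
      rcases eq_or_lt_of_le hj1 with h1 | h1
      · have : j - 1 = 0 := by omega
        rw [this]
        obtain ⟨hba, hbb⟩ := hbdry t₀ ht₀0
        constructor <;> linarith
      · have h := hat (j - 1) (by omega)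
        constructor <;> linarith [h.1, h.2]
    rcases hdisj with hlow | hhigh
    · -- lower touching
      have heqv : v t₀ j = a - 2 * d := by
        have := (hat j hj1).1
        have h2 : ε * 2 ^ j * E = 2 * d := by rw [h2j, hddef]; ring
        linarith [le_antisymm hlow this]
      -- slope comparison : v' t₀ j ≤ -K * 2d
      have hψs : Filter.Tendsto (slope (fun t => a - ε * 2 ^ j * Real.exp (K * t)) t₀)
          (𝓝[Set.Iio t₀] t₀) (𝓝 (-(ε * 2 ^ j * (E * K)))) := by
        have hd2 : HasDerivAt (fun t : ℝ => a - ε * 2 ^ j * Real.exp (K * t))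
            (-(ε * 2 ^ j * (E * K))) t₀ := by
          have h1 : HasDerivAt (fun t : ℝ => K * t) K t₀ := by
            simpa using (hasDerivAt_id t₀).const_mul K
          exact (h1.exp.const_mul (ε * 2 ^ j)).const_sub a
        exact (hasDerivAt_iff_tendsto_slope.1 hd2).mono_left (nhdsWithin_le_of_mem hmemC)
      have hcmp : ∀ᶠ t in 𝓝[Set.Iio t₀] t₀,
          slope (fun s => v s j) t₀ t ≤
          slope (fun t => a - ε * 2 ^ j * Real.exp (K * t)) t₀ t := by
        filter_upwards [hIci_mem, self_mem_nhdsWithin] with t ht hlt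
        rw [slope_def_field, slope_def_field]
        have hlt' : t < t₀ := hlt
        have ht' : (0:ℝ) ≤ t := ht
        apply slope_flip (by linarith)
        have h1 := (hbefore t ht hlt j hj1).1
        have h2 : a - ε * 2 ^ j * Real.exp (K * t₀) = v t₀ j := by
          rw [← hEdef, heqv, h2j, hddef]; ring
        rw [h2]
        linarith
      have hder_le : v' t₀ j ≤ -(ε * 2 ^ j * (E * K)) :=
        le_of_tendsto_of_tendsto hsv hψs hcmp
      have hN := Nfun_lower μ θ p q a (v t₀ (j - 1)) (v t₀ (j + 1)) d hμ hp hq0 hpq ha hd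
        hu.2 hw.2
      rw [← heqv] at hN
      rw [heqN] at hder_le
      have hc : ε * 2 ^ j * (E * K) = K * (2 * d) := by rw [h2j, hddef]; ring
      rw [hc] at hder_le
      nlinarith [mul_pos hμ hd]
    · -- upper touching
      have heqv : v t₀ j = b + 2 * d := by
        have := (hat j hj1).2
        have h2 : ε * 2 ^ j * E = 2 * d := by rw [h2j, hddef]; ring
        linarith [le_antisymm this hhigh]
      have hψs : Filter.Tendsto (slope (fun t => b + ε * 2 ^ j * Real.exp (K * t)) t₀)
          (𝓝[Set.Iio t₀] t₀) (𝓝 (ε * 2 ^ j * (E * K))) := by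
        have hd2 : HasDerivAt (fun t : ℝ => b + ε * 2 ^ j * Real.exp (K * t))
            (ε * 2 ^ j * (E * K)) t₀ := hψd b
        exact (hasDerivAt_iff_tendsto_slope.1 hd2).mono_left (nhdsWithin_le_of_mem hmemC)
      have hcmp : ∀ᶠ t in 𝓝[Set.Iio t₀] t₀,
          slope (fun t => b + ε * 2 ^ j * Real.exp (K * t)) t₀ t ≤
          slope (fun s => v s j) t₀ t := by
        filter_upwards [hIci_mem, self_mem_nhdsWithin] with t ht hlt
        rw [slope_def_field, slope_def_field]
        have hlt' : t < t₀ := hlt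
        have ht' : (0:ℝ) ≤ t := ht
        apply slope_flip (by linarith)
        have h1 := (hbefore t ht hlt j hj1).2
        have h2 : b + ε * 2 ^ j * Real.exp (K * t₀) = v t₀ j := by
          rw [← hEdef, heqv, h2j, hddef]; ring
        rw [h2]
        linarith
      have hder_ge : ε * 2 ^ j * (E * K) ≤ v' t₀ j :=
        le_of_tendsto_of_tendsto hψs hsv hcmp
      have hN := Nfun_upper μ θ p q b (v t₀ (j - 1)) (v t₀ (j + 1)) d hμ hp hq0 hpq hb hd
        hu.1 hw.1
      rw [← heqv] at hN
      rw [heqN] at hder_ge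
      have hc : ε * 2 ^ j * (E * K) = K * (2 * d) := by rw [h2j, hddef]; ring
      rw [hc] at hder_ge
      nlinarith [mul_pos hμ hd]
  -- conclude by letting ε → 0
  intro t ht j hj
  have hexp : (0:ℝ) < 2 ^ j * Real.exp (K * t) := by positivity
  constructor
  · by_contra hc
    push_neg at hc
    have hε : 0 < (a - v t j) / (2 ^ j * Real.exp (K * t)) := by
      apply div_pos (by linarith) hexp
    have h2 := (key _ hε t ht.le j hj).1
    have hx : (a - v t j) / (2 ^ j * Real.exp (K * t)) * 2 ^ j * Real.exp (K * t)
        = a - v t j := by field_simp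
    rw [hx] at h2
    linarith
  · by_contra hc
    push_neg at hc
    have hε : 0 < (v t j - b) / (2 ^ j * Real.exp (K * t)) := by
      apply div_pos (by linarith) hexp
    have h2 := (key _ hε t ht.le j hj).2
    have hx : (v t j - b) / (2 ^ j * Real.exp (K * t)) * 2 ^ j * Real.exp (K * t)
        = v t j - b := by field_simp
    rw [hx] at h2
    linarith
end
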